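/- arXiv:0908.2228 — 3 statements merged into one kernel-verified Lean document; each statement's English description precedes it below -/
import Mathlib

section
/- For any towers (X_n)_{n∈ω} and (Y_n)_{n∈ω} of uniform spaces, the identity map u-lim (X_n × Y_n) → (u-lim X_n) × (u-lim Y_n) is a homeomorphism, where each X_n × Y_n carries the product uniformity and the right-hand side carries the product topology. -/
open Set Filter Topology
open scoped Uniformity
open scoped SetRel

universe u

/-- A tower of uniform spaces on the ambient set `X`: an increasing sequence
`S 0 ⊆ S 1 ⊆ ⋯` of subsets covering `X`, each `S n` carrying a uniformity which is
the subspace uniformity inherited from `S (n+1)`. -/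
structure UniformTower (X : Type u) where
  S : ℕ → Set X
  mono : Monotone S
  iUnion_eq : ⋃ n, S n = Set.univ
  u : (n : ℕ) → UniformSpace (S n)
  compat : ∀ n, u n = UniformSpace.comap (Set.inclusion (mono (Nat.le_succ n))) (u (n + 1))

namespace UniformTower

variable {X : Type u} (T : UniformTower X)

/-- The uniform direct limit: the strongest (finest) uniformity on `X` making all
the identity inclusions `S n → X` uniformly continuous. -/
noncomputable def dirLim : UniformSpace X :=
  sInf {u' : UniformSpace X |
    ∀ n, @UniformContinuous _ _ (T.u n) u' (Subtype.val : T.S n → X)}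

/-- The height `|x| = min {n : x ∈ S n}` of a point of `X`. -/
noncomputable def height (x : X) : ℕ := sInf {n | x ∈ T.S n}

lemma mem_S_height (x : X) : x ∈ T.S (T.height x) := by
  have hx : x ∈ ⋃ n, T.S n := T.iUnion_eq ▸ Set.mem_univ x
  rcases Set.mem_iUnion.mp hx with ⟨n, hn⟩
  exact Nat.sInf_mem ⟨n, show n ∈ {m | x ∈ T.S m} from hn⟩

/-- Given a sequence of pseudometrics `d n` on the stages `S n`, the distance
`d_{|x,y|}(x,y)` where `|x,y| = max (|x|, |y|)`. -/
noncomputable def chainD (d : (n : ℕ) → T.S n → T.S n → ℝ) (x y : X) : ℝ :=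
  d (max (T.height x) (T.height y))
    ⟨x, T.mono (le_max_left _ _) (T.mem_S_height x)⟩
    ⟨y, T.mono (le_max_right _ _) (T.mem_S_height y)⟩

/-- The limit pseudometric `lim d_n` of a sequence of pseudometrics:
`lim d_n (x,y) = inf { Σ_{i=1}^m d_{|x_{i-1},x_i|}(x_{i-1},x_i) : x = x_0, x_1, …, x_m = y }`. -/
noncomputable def limD (d : (n : ℕ) → T.S n → T.S n → ℝ) (x y : X) : ℝ :=
  sInf {r : ℝ | ∃ (m : ℕ) (c : ℕ → X), c 0 = x ∧ c m = y ∧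
    r = ∑ i ∈ Finset.range m, T.chainD d (c i) (c (i + 1))}

/-- A sequence of pseudometrics on the stages of the tower is monotone if
`d n ≤ d (n+1)` on `S n × S n`. -/
def MonotoneSeq (d : (n : ℕ) → T.S n → T.S n → ℝ) : Prop :=
  ∀ n (x y : T.S n),
    d n x y ≤ d (n + 1) (Set.inclusion (T.mono (Nat.le_succ n)) x)
      (Set.inclusion (T.mono (Nat.le_succ n)) y)

end UniformTower

/-- `d` is a pseudometric: it vanishes on the diagonal, is symmetric and satisfies
the triangle inequality. -/
def IsPseudometric {α : Type*} (d : α → α → ℝ) : Prop :=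
  (∀ x, d x x = 0) ∧ (∀ x y, d x y = d y x) ∧ (∀ x y z, d x z ≤ d x y + d y z)

/-- `d` is a uniform pseudometric on the uniform space `(α, u)`:
for every `ε > 0` the set `{d < ε}` is an entourage. -/
def IsUniformPseudometric {α : Type*} (u : UniformSpace α) (d : α → α → ℝ) : Prop :=
  IsPseudometric d ∧ ∀ ε : ℝ, 0 < ε → {p : α × α | d p.1 p.2 < ε} ∈ @uniformity α u

lemma IsPseudometric.nonneg {α : Type*} {d : α → α → ℝ} (h : IsPseudometric d) (x y : α) :
    0 ≤ d x y := by
  have h1 := h.2.2 x y x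
  rw [h.1 x, h.2.1 y x] at h1
  linarith

namespace UniformTower

variable {X : Type u} (T : UniformTower X)

lemma height_le {x : X} {n : ℕ} (h : x ∈ T.S n) : T.height x ≤ n := Nat.sInf_le h

lemma d_apply_congr (d : (n : ℕ) → T.S n → T.S n → ℝ) {k k' : ℕ} (h : k = k') {x y : X}
    (hx : x ∈ T.S k) (hy : y ∈ T.S k) :
    d k ⟨x, hx⟩ ⟨y, hy⟩ = d k' ⟨x, h ▸ hx⟩ ⟨y, h ▸ hy⟩ := by subst h; rfl

lemma incl_uc {m n : ℕ} (h : m ≤ n) :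
    UniformContinuous[T.u m, T.u n] (Set.inclusion (T.mono h)) := by
  induction n, h using Nat.le_induction with
  | base => exact @uniformContinuous_id _ (T.u m)
  | succ n hmn ih =>
    have step : UniformContinuous[T.u n, T.u (n + 1)]
        (Set.inclusion (T.mono (Nat.le_succ n))) := by
      rw [T.compat n]
      exact @uniformContinuous_comap _ _ _ (T.u (n + 1))
    exact @UniformContinuous.comp _ _ _ (T.u m) (T.u n) (T.u (n + 1)) _ _ step ih

lemma val_uc (n : ℕ) : UniformContinuous[T.u n, T.dirLim] (Subtype.val : T.S n → X) :=
  uniformContinuous_sInf_rng.mpr fun _ hu' => hu' n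

variable {d : (n : ℕ) → T.S n → T.S n → ℝ}

lemma mono_le (hd : T.MonotoneSeq d) {m n : ℕ} (h : m ≤ n) (x y : T.S m) :
    d m x y ≤ d n ⟨x.1, T.mono h x.2⟩ ⟨y.1, T.mono h y.2⟩ := by
  induction n, h using Nat.le_induction with
  | base => exact le_of_eq rfl
  | succ n hmn ih => exact ih.trans (hd n _ _)

lemma chainD_le (hd : T.MonotoneSeq d) {n : ℕ} {x y : X} (hx : x ∈ T.S n) (hy : y ∈ T.S n) :
    T.chainD d x y ≤ d n ⟨x, hx⟩ ⟨y, hy⟩ := by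
  have hk : max (T.height x) (T.height y) ≤ n := max_le (T.height_le hx) (T.height_le hy)
  exact T.mono_le hd hk _ _

lemma chainD_nonneg (hp : ∀ n, IsPseudometric (d n)) (x y : X) : 0 ≤ T.chainD d x y :=
  (hp _).nonneg _ _

lemma chainD_symm (hp : ∀ n, IsPseudometric (d n)) (x y : X) :
    T.chainD d x y = T.chainD d y x := by
  show d (max (T.height x) (T.height y)) _ _ = d (max (T.height y) (T.height x)) _ _
  rw [(hp _).2.1]
  exact T.d_apply_congr d (max_comm _ _) _ _

/-- the set of chain sums -/
def chainSums (d : (n : ℕ) → T.S n → T.S n → ℝ) (x y : X) : Set ℝ :=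
  {r : ℝ | ∃ (m : ℕ) (c : ℕ → X), c 0 = x ∧ c m = y ∧
    r = ∑ i ∈ Finset.range m, T.chainD d (c i) (c (i + 1))}

lemma limD_eq (x y : X) : T.limD d x y = sInf (T.chainSums d x y) := rfl

lemma chainSums_nonempty (x y : X) : (T.chainSums d x y).Nonempty := by
  refine ⟨T.chainD d x y, 1, fun i => if i = 0 then x else y, by simp, by simp, ?_⟩
  simp [Finset.sum_range_one]

lemma chainSums_bddBelow (hp : ∀ n, IsPseudometric (d n)) (x y : X) :
    BddBelow (T.chainSums d x y) := by
  refine ⟨0, fun r hr => ?_⟩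
  obtain ⟨m, c, -, -, rfl⟩ := hr
  exact Finset.sum_nonneg fun i _ => T.chainD_nonneg hp _ _

lemma limD_nonneg (hp : ∀ n, IsPseudometric (d n)) (x y : X) : 0 ≤ T.limD d x y :=
  le_csInf (T.chainSums_nonempty x y) fun r hr => by
    obtain ⟨m, c, -, -, rfl⟩ := hr
    exact Finset.sum_nonneg fun i _ => T.chainD_nonneg hp _ _

lemma limD_le (hp : ∀ n, IsPseudometric (d n)) {x y : X} {r : ℝ}
    (hr : r ∈ T.chainSums d x y) : T.limD d x y ≤ r :=
  csInf_le (T.chainSums_bddBelow hp x y) hr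

lemma limD_le_chainD (hp : ∀ n, IsPseudometric (d n)) (x y : X) :
    T.limD d x y ≤ T.chainD d x y := by
  refine T.limD_le hp ⟨1, fun i => if i = 0 then x else y, by simp, by simp, ?_⟩
  simp [Finset.sum_range_one]

lemma limD_self (hp : ∀ n, IsPseudometric (d n)) (x : X) : T.limD d x x = 0 := by
  refine le_antisymm ?_ (T.limD_nonneg hp x x)
  have := T.limD_le_chainD hp x x
  have h0 : T.chainD d x x = 0 := (hp _).1 _
  linarith

lemma limD_symm (hp : ∀ n, IsPseudometric (d n)) (x y : X) :
    T.limD d x y = T.limD d y x := by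
  have key : ∀ a b : X, T.limD d a b ≤ T.limD d b a := by
    intro a b
    refine le_csInf (T.chainSums_nonempty b a) fun r hr => ?_
    obtain ⟨m, c, hc0, hcm, rfl⟩ := hr
    refine T.limD_le hp ⟨m, fun i => c (m - i), by simp [hcm], by simp [hc0], ?_⟩
    rw [show (∑ i ∈ Finset.range m, T.chainD d (c i) (c (i + 1)))
        = ∑ i ∈ Finset.range m, (fun j => T.chainD d (c j) (c (j + 1))) (m - 1 - i) from
      (Finset.sum_range_reflect _ m).symm]
    refine Finset.sum_congr rfl fun i hi => ?_
    rw [Finset.mem_range] at hi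
    show T.chainD d (c (m - 1 - i)) (c (m - 1 - i + 1))
        = T.chainD d (c (m - i)) (c (m - (i + 1)))
    have h2 : m - 1 - i + 1 = m - i := by omega
    have h3 : m - (i + 1) = m - 1 - i := by omega
    rw [h2, h3, T.chainD_symm hp]
  exact le_antisymm (key x y) (key y x)

lemma limD_triangle (hp : ∀ n, IsPseudometric (d n)) (x y z : X) :
    T.limD d x z ≤ T.limD d x y + T.limD d y z := by
  have key : ∀ r ∈ T.chainSums d x y, ∀ s ∈ T.chainSums d y z, T.limD d x z ≤ r + s := by
    rintro r ⟨m₁, c₁, hc₁0, hc₁m, rfl⟩ s ⟨m₂, c₂, hc₂0, hc₂m, rfl⟩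
    refine T.limD_le hp ⟨m₁ + m₂, fun i => if i ≤ m₁ then c₁ i else c₂ (i - m₁), ?_, ?_, ?_⟩
    · simp [hc₁0]
    · rcases Nat.eq_zero_or_pos m₂ with h2 | h2
      · subst h2; simpa [hc₁m] using hc₂0.symm.trans hc₂m
      · have : ¬ m₁ + m₂ ≤ m₁ := by omega
        simp only [this, if_false]
        rw [Nat.add_sub_cancel_left, hc₂m]
    · rw [Finset.sum_range_add]
      congr 1
      · refine Finset.sum_congr rfl fun i hi => ?_
        rw [Finset.mem_range] at hi
        have h1 : i ≤ m₁ := by omega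
        have h2 : i + 1 ≤ m₁ := by omega
        simp [h1, h2]
      · refine Finset.sum_congr rfl fun i hi => ?_
        rw [Finset.mem_range] at hi
        have h2 : ¬ (m₁ + i + 1 ≤ m₁) := by omega
        have h3 : m₁ + i + 1 - m₁ = i + 1 := by omega
        rcases Nat.eq_zero_or_pos i with h0 | h0
        · subst h0
          have e1 : (fun i => if i ≤ m₁ then c₁ i else c₂ (i - m₁)) (m₁ + 0) = c₂ 0 := by
            simp only [Nat.add_zero, if_pos (le_refl m₁)]
            rw [hc₁m, ← hc₂0]
          have e2 : (fun i => if i ≤ m₁ then c₁ i else c₂ (i - m₁)) (m₁ + 0 + 1) = c₂ (0 + 1) := by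
            simp only []
            rw [if_neg h2, h3]
          rw [e1, e2]
        · have h4 : ¬ (m₁ + i ≤ m₁) := by omega
          have h5 : m₁ + i - m₁ = i := by omega
          simp [h2, h4, h3, h5]
  have step1 : ∀ s ∈ T.chainSums d y z, T.limD d x z - s ≤ T.limD d x y := by
    intro s hs
    refine le_csInf (T.chainSums_nonempty x y) fun r hr => ?_
    linarith [key r hr s hs]
  have step2 : T.limD d x z - T.limD d x y ≤ T.limD d y z := by
    refine le_csInf (T.chainSums_nonempty y z) fun s hs => ?_
    linarith [step1 s hs]
  linarith

lemma limD_isPseudometric (hp : ∀ n, IsPseudometric (d n)) :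
    IsPseudometric (T.limD d) :=
  ⟨T.limD_self hp, T.limD_symm hp, T.limD_triangle hp⟩

lemma limD_le_d (hp : ∀ n, IsPseudometric (d n)) (hd : T.MonotoneSeq d) {n : ℕ}
    (x y : T.S n) : T.limD d x.1 y.1 ≤ d n x y := by
  refine (T.limD_le_chainD hp _ _).trans ?_
  have := T.chainD_le hd x.2 y.2
  exact this

lemma limD_mem_dirLim (hpu : ∀ n, IsUniformPseudometric (T.u n) (d n))
    (hd : T.MonotoneSeq d) {ε : ℝ} (hε : 0 < ε) :
    {p : X × X | T.limD d p.1 p.2 < ε} ∈ @uniformity X T.dirLim := by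
  have hp : ∀ n, IsPseudometric (d n) := fun n => (hpu n).1
  have pm := T.limD_isPseudometric hp
  let u' : UniformSpace X :=
    UniformSpace.ofFun (T.limD d) pm.1 pm.2.1 pm.2.2 UniformSpace.ofDist_aux
  have hbasis := UniformSpace.hasBasis_ofFun (⟨1, one_pos⟩ : ∃ x : ℝ, 0 < x)
    (T.limD d) pm.1 pm.2.1 pm.2.2 UniformSpace.ofDist_aux
  have hmem : u' ∈ {v : UniformSpace X |
      ∀ n, @UniformContinuous _ _ (T.u n) v (Subtype.val : T.S n → X)} := by
    intro n
    refine hbasis.tendsto_right_iff.mpr fun δ hδ => ?_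
    refine Filter.mem_of_superset ((hpu n).2 δ hδ) fun p hp' => ?_
    exact lt_of_le_of_lt (T.limD_le_d hp hd p.1 p.2) hp'
  have hle : T.dirLim ≤ u' := sInf_le hmem
  exact Filter.le_def.mp hle _ (hbasis.mem_of_mem hε)

end UniformTower

lemma min_le_of_lt_one {t c : ℝ} (h : min t 1 ≤ c) (hc : c < 1) : t ≤ c := by
  rcases le_or_gt t 1 with h1 | h1
  · rwa [min_eq_left h1] at h
  · exfalso; rw [min_eq_right h1.le] at h; linarith

lemma min_one_triangle {a b c : ℝ} (hb : 0 ≤ b) (hc : 0 ≤ c) (h : a ≤ b + c) :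
    min a 1 ≤ min b 1 + min c 1 := by
  rcases le_or_gt 1 b with hb1 | hb1
  · linarith [min_le_right a 1, min_eq_right hb1, le_min hc zero_le_one]
  rcases le_or_gt 1 c with hc1 | hc1
  · linarith [min_le_right a 1, min_eq_right hc1, le_min hb zero_le_one]
  · rw [min_eq_left hb1.le, min_eq_left hc1.le]
    exact le_trans (min_le_left a 1) h

/-- The scheduling lemma: combine a chain in `X` and a chain in `Y` into a bound on `ρ`. -/
lemma sched {X Y : Type u} (TX : UniformTower X) (TY : UniformTower Y)
    {ρ : X × Y → X × Y → ℝ} (hρ : IsPseudometric ρ) (x₀ : X) (y₀ : Y) :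
    ∀ N m l : ℕ, m + l ≤ N → ∀ (a : ℕ → X) (b : ℕ → Y) (CX CY : ℕ → ℝ),
      a m = x₀ → b l = y₀ →
      (∀ i, i < m → CX i < 1 ∧ ∀ y',
        (y' ∈ TY.S (max (TX.height (a i)) (TX.height (a (i + 1)))) ∨ y' = y₀) →
        min (ρ (a i, y') (a (i + 1), y')) 1 ≤ CX i) →
      (∀ j, j < l → CY j < 1 ∧ ∀ x',
        (x' ∈ TX.S (max (TY.height (b j)) (TY.height (b (j + 1)))) ∨ x' = x₀) →
        min (ρ (x', b j) (x', b (j + 1))) 1 ≤ CY j) →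
      ρ (a 0, b 0) (x₀, y₀) ≤ (∑ i ∈ Finset.range m, CX i) + ∑ j ∈ Finset.range l, CY j := by
  intro N
  induction N with
  | zero =>
    intro m l hml a b CX CY ham hbl hX hY
    have hm : m = 0 := by omega
    have hl : l = 0 := by omega
    subst hm; subst hl
    simp only [Finset.range_zero, Finset.sum_empty, add_zero]
    rw [← ham, ← hbl]
    exact le_of_eq (hρ.1 _)
  | succ N ih =>
    intro m l hml a b CX CY ham hbl hX hY
    rcases Nat.eq_zero_or_pos m with hm | hm
    · subst hm
      rcases Nat.eq_zero_or_pos l with hl | hl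
      · subst hl
        simp only [Finset.range_zero, Finset.sum_empty, add_zero]
        rw [← ham, ← hbl]
        exact le_of_eq (hρ.1 _)
      · -- Y-move with partner x₀ = a 0
        obtain ⟨l', rfl⟩ : ∃ l', l = l' + 1 := ⟨l - 1, by omega⟩
        have hstep := hY 0 (by omega)
        have hmin : min (ρ (a 0, b 0) (a 0, b 1)) 1 ≤ CY 0 := hstep.2 (a 0) (Or.inr ham)
        have hρ01 : ρ (a 0, b 0) (a 0, b 1) ≤ CY 0 := min_le_of_lt_one hmin hstep.1
        have hrec := ih 0 l' (by omega) a (fun j => b (j + 1)) CX (fun j => CY (j + 1))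
          ham hbl (fun i hi => absurd hi (by omega)) (fun j hj => hY (j + 1) (by omega))
        have htri := hρ.2.2 (a 0, b 0) (a 0, b 1) (x₀, y₀)
        have hsum : ∑ j ∈ Finset.range (l' + 1), CY j
            = (∑ j ∈ Finset.range l', CY (j + 1)) + CY 0 := Finset.sum_range_succ' CY l'
        simp only [Finset.range_zero, Finset.sum_empty, zero_add] at hrec ⊢
        linarith
    · obtain ⟨m', rfl⟩ : ∃ m', m = m' + 1 := ⟨m - 1, by omega⟩
      by_cases hmove : l = 0 ∨ TY.height (b 0) ≤ TX.height (a 0)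
      · -- X-move with partner b 0
        have hstep := hX 0 (by omega)
        have hpart : (b 0 ∈ TY.S (max (TX.height (a 0)) (TX.height (a 1))) ∨ b 0 = y₀) := by
          rcases hmove with hl0 | hle
          · exact Or.inr (hl0 ▸ hbl)
          · exact Or.inl (TY.mono (hle.trans (le_max_left _ _)) (TY.mem_S_height (b 0)))
        have hmin : min (ρ (a 0, b 0) (a 1, b 0)) 1 ≤ CX 0 := hstep.2 (b 0) hpart
        have hρ01 : ρ (a 0, b 0) (a 1, b 0) ≤ CX 0 := min_le_of_lt_one hmin hstep.1
        have hrec := ih m' l (by omega) (fun i => a (i + 1)) b (fun i => CX (i + 1)) CY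
          ham hbl (fun i hi => hX (i + 1) (by omega)) hY
        have htri := hρ.2.2 (a 0, b 0) (a 1, b 0) (x₀, y₀)
        have hsum : ∑ i ∈ Finset.range (m' + 1), CX i
            = (∑ i ∈ Finset.range m', CX (i + 1)) + CX 0 := Finset.sum_range_succ' CX m'
        linarith
      · -- Y-move with partner a 0
        push_neg at hmove
        obtain ⟨hl0, hlt⟩ := hmove
        obtain ⟨l', rfl⟩ : ∃ l', l = l' + 1 := ⟨l - 1, by omega⟩
        have hstep := hY 0 (by omega)
        have hpart : (a 0 ∈ TX.S (max (TY.height (b 0)) (TY.height (b 1))) ∨ a 0 = x₀) :=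
          Or.inl (TX.mono (hlt.le.trans (le_max_left _ _)) (TX.mem_S_height (a 0)))
        have hmin : min (ρ (a 0, b 0) (a 0, b 1)) 1 ≤ CY 0 := hstep.2 (a 0) hpart
        have hρ01 : ρ (a 0, b 0) (a 0, b 1) ≤ CY 0 := min_le_of_lt_one hmin hstep.1
        have hrec := ih (m' + 1) l' (by omega) a (fun j => b (j + 1)) CX (fun j => CY (j + 1))
          ham hbl hX (fun j hj => hY (j + 1) (by omega))
        have htri := hρ.2.2 (a 0, b 0) (a 0, b 1) (x₀, y₀)
        have hsum : ∑ j ∈ Finset.range (l' + 1), CY j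
            = (∑ j ∈ Finset.range l', CY (j + 1)) + CY 0 := Finset.sum_range_succ' CY l'
        linarith

/-- The "partner supremum" pseudometric on stage `n` of the tower `TA`. -/
noncomputable def partnerD {A B W : Type u} (TA : UniformTower A) (TB : UniformTower B)
    (ρ : W → W → ℝ) (g : A → B → W) (b₀ : B) (n : ℕ) (a a' : TA.S n) : ℝ :=
  sSup (insert 0 ((fun b => min (ρ (g a.1 b) (g a'.1 b)) 1) '' (TB.S n ∪ {b₀})))

section partnerD

variable {A B W : Type u} (TA : UniformTower A) (TB : UniformTower B)
  {ρ : W → W → ℝ} (g : A → B → W) (b₀ : B)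

lemma partnerD_bddAbove (hρ : IsPseudometric ρ) (n : ℕ) (a a' : TA.S n) :
    BddAbove (insert 0 ((fun b => min (ρ (g a.1 b) (g a'.1 b)) 1) '' (TB.S n ∪ {b₀}))) := by
  refine ⟨1, ?_⟩
  rintro t (rfl | ⟨b, hb, rfl⟩)
  · exact zero_le_one
  · exact min_le_right _ _

lemma partnerD_nonneg (hρ : IsPseudometric ρ) (n : ℕ) (a a' : TA.S n) :
    0 ≤ partnerD TA TB ρ g b₀ n a a' :=
  le_csSup (partnerD_bddAbove TA TB g b₀ hρ n a a') (Set.mem_insert _ _)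

lemma le_partnerD (hρ : IsPseudometric ρ) {n : ℕ} {a a' : TA.S n} {b : B}
    (hb : b ∈ TB.S n ∪ {b₀}) :
    min (ρ (g a.1 b) (g a'.1 b)) 1 ≤ partnerD TA TB ρ g b₀ n a a' :=
  le_csSup (partnerD_bddAbove TA TB g b₀ hρ n a a')
    (Set.mem_insert_of_mem _ ⟨b, hb, rfl⟩)

lemma partnerD_le (hρ : IsPseudometric ρ) {n : ℕ} {a a' : TA.S n} {r : ℝ} (h0 : 0 ≤ r)
    (helem : ∀ b ∈ TB.S n ∪ {b₀}, min (ρ (g a.1 b) (g a'.1 b)) 1 ≤ r) :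
    partnerD TA TB ρ g b₀ n a a' ≤ r := by
  refine csSup_le ⟨0, Set.mem_insert _ _⟩ ?_
  rintro t (rfl | ⟨b, hb, rfl⟩)
  · exact h0
  · exact helem b hb

lemma partnerD_isPseudometric (hρ : IsPseudometric ρ) (n : ℕ) :
    IsPseudometric (partnerD TA TB ρ g b₀ n) := by
  refine ⟨fun a => ?_, fun a a' => ?_, fun a a' a'' => ?_⟩
  · refine le_antisymm ?_ (partnerD_nonneg TA TB g b₀ hρ n a a)
    refine partnerD_le TA TB g b₀ hρ le_rfl fun b _ => ?_
    rw [hρ.1 (g a.1 b)]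
    simp
  · have hfun : (fun b => min (ρ (g a.1 b) (g a'.1 b)) 1)
        = (fun b => min (ρ (g a'.1 b) (g a.1 b)) 1) := funext fun b => by rw [hρ.2.1]
    unfold partnerD
    rw [hfun]
  · refine partnerD_le TA TB g b₀ hρ
      (add_nonneg (partnerD_nonneg TA TB g b₀ hρ n a a')
        (partnerD_nonneg TA TB g b₀ hρ n a' a'')) fun b hb => ?_
    refine le_trans (min_one_triangle (hρ.nonneg _ _) (hρ.nonneg _ _)
      (hρ.2.2 (g a.1 b) (g a'.1 b) (g a''.1 b))) ?_
    exact add_le_add (le_partnerD TA TB g b₀ hρ hb) (le_partnerD TA TB g b₀ hρ hb)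

lemma partnerD_monotoneSeq (hρ : IsPseudometric ρ) :
    TA.MonotoneSeq (partnerD TA TB ρ g b₀) := by
  intro n a a'
  refine partnerD_le TA TB g b₀ hρ
    (partnerD_nonneg TA TB g b₀ hρ (n + 1) _ _) fun b hb => ?_
  refine le_partnerD TA TB g b₀ hρ
    (a := Set.inclusion (TA.mono (Nat.le_succ n)) a)
    (a' := Set.inclusion (TA.mono (Nat.le_succ n)) a') ?_
  rcases hb with hb | hb
  · exact Or.inl (TB.mono (Nat.le_succ n) hb)
  · exact Or.inr hb

lemma partnerD_uniform {uw : UniformSpace W} (hρ : IsUniformPseudometric uw ρ)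
    (huc : ∀ n : ℕ, ∃ m, n ≤ m ∧ b₀ ∈ TB.S m ∧
      UniformContinuous[@instUniformSpaceProd _ _ (TA.u n) (TB.u m), uw]
        (fun p : TA.S n × TB.S m => g p.1.1 p.2.1)) (n : ℕ) :
    IsUniformPseudometric (TA.u n) (partnerD TA TB ρ g b₀ n) := by
  refine ⟨partnerD_isPseudometric TA TB g b₀ hρ.1 n, fun ε hε => ?_⟩
  obtain ⟨m, hnm, hb₀m, hΦ⟩ := huc n
  set η : ℝ := min ε 1 / 2 with hη
  have hη0 : 0 < η := by positivity
  have hηε : η < ε := by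
    have h1 : min ε 1 ≤ ε := min_le_left _ _
    have h2 : min ε 1 ≤ 1 := min_le_right _ _
    rw [hη]; rcases min_cases ε 1 with ⟨h, _⟩ | ⟨h, _⟩ <;> [skip; skip] <;> linarith
  have hR : {q : W × W | ρ q.1 q.2 < η} ∈ @uniformity W uw := hρ.2 η hη0
  have hpre : (fun q : (TA.S n × TB.S m) × TA.S n × TB.S m =>
      ((fun p : TA.S n × TB.S m => g p.1.1 p.2.1) q.1,
       (fun p : TA.S n × TB.S m => g p.1.1 p.2.1) q.2)) ⁻¹' {q : W × W | ρ q.1 q.2 < η}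
      ∈ @uniformity _ (@instUniformSpaceProd _ _ (TA.u n) (TB.u m)) :=
    Filter.mem_map.mp (Filter.le_def.mp hΦ _ hR)
  rw [@uniformity_prod _ _ (TA.u n) (TB.u m)] at hpre
  obtain ⟨t₁, ht₁, t₂, ht₂, hts⟩ := Filter.mem_inf_iff_superset.mp hpre
  obtain ⟨Un, hUn, hUn'⟩ := Filter.mem_comap.mp ht₁
  obtain ⟨Vm, hVm, hVm'⟩ := Filter.mem_comap.mp ht₂
  refine Filter.mem_of_superset hUn fun q hq => ?_
  show partnerD TA TB ρ g b₀ n q.1 q.2 < ε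
  refine lt_of_le_of_lt (partnerD_le TA TB g b₀ hρ.1 hη0.le fun b hb => ?_) hηε
  have hbm : b ∈ TB.S m := by
    rcases hb with hb | hb
    · exact TB.mono hnm hb
    · exact hb ▸ hb₀m
  have hmem : ((q.1, ⟨b, hbm⟩), (q.2, ⟨b, hbm⟩)) ∈ t₁ ∩ t₂ := by
    constructor
    · exact hUn' hq
    · exact hVm' (@refl_mem_uniformity _ (TB.u m) _ _ hVm)
  have := hts hmem
  exact le_trans (min_le_left _ _) (le_of_lt this)

end partnerD

/-- Inside every entourage of a uniform space there is a uniform pseudometric ball. -/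
lemma exists_unif_pm {α : Type*} (u : UniformSpace α) {E : Set (α × α)} (hE : E ∈ @uniformity α u) :
    ∃ ρ : α → α → ℝ, IsUniformPseudometric u ρ ∧ {p : α × α | ρ p.1 p.2 < 1} ⊆ E := by
  letI := u
  have step : ∀ s : Set (α × α), s ∈ 𝓤 α →
      ∃ W, (W ∈ 𝓤 α ∧ SetRel.IsSymm W) ∧ W ○ W ⊆ s := by
    intro s hs
    rcases comp_symm_mem_uniformity_sets hs with ⟨W, h1, h2, h3⟩
    exact ⟨W, ⟨h1, h2⟩, h3⟩
  let F : {s : Set (α × α) // s ∈ 𝓤 α} → {s : Set (α × α) // s ∈ 𝓤 α ∧ SetRel.IsSymm s} :=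
    fun s => ⟨(step s.1 s.2).choose, (step s.1 s.2).choose_spec.1⟩
  let V : ℕ → {s : Set (α × α) // s ∈ 𝓤 α ∧ SetRel.IsSymm s} :=
    fun n => Nat.rec (F ⟨E, hE⟩) (fun _ prev => F ⟨prev.1, prev.2.1⟩) n
  have hVmem : ∀ n, (V n).1 ∈ 𝓤 α := fun n => (V n).2.1
  have hVsymm : ∀ n, SetRel.IsSymm (V n).1 := fun n => (V n).2.2
  have hV0E : (V 0).1 ○ (V 0).1 ⊆ E := (step E hE).choose_spec.2
  have hVcomp : ∀ n, (V (n + 1)).1 ○ (V (n + 1)).1 ⊆ (V n).1 := fun n =>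
    (step (V n).1 (V n).2.1).choose_spec.2
  have hsub_of_comp : ∀ (W s : Set (α × α)), W ∈ 𝓤 α → W ○ W ⊆ s → W ⊆ s := by
    intro W s hW hc p hp
    exact hc ⟨p.1, refl_mem_uniformity hW, hp⟩
  have hV0E' : (V 0).1 ⊆ E := hsub_of_comp _ _ (hVmem 0) hV0E
  have hVsub : ∀ n, (V (n + 1)).1 ⊆ (V n).1 := fun n =>
    hsub_of_comp _ _ (hVmem (n + 1)) (hVcomp n)
  have hVanti : ∀ m n, m ≤ n → (V n).1 ⊆ (V m).1 := by
    intro m n h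
    induction n, h using Nat.le_induction with
    | base => exact subset_rfl
    | succ n hmn ih => exact (hVsub n).trans ih
  set f : Filter (α × α) := ⨅ n, 𝓟 (V n).1 with hf
  have hdir : Directed (· ≥ ·) fun n => (V n).1 := fun m n =>
    ⟨max m n, hVanti m _ (le_max_left _ _), hVanti n _ (le_max_right _ _)⟩
  have hbasis : f.HasBasis (fun _ => True) fun n => (V n).1 := hasBasis_iInf_principal hdir
  have hfle : ∀ s ∈ f, s ∈ 𝓤 α := by
    intro s hs
    rcases hbasis.mem_iff.mp hs with ⟨n, -, hn⟩
    exact mem_of_superset (hVmem n) hn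
  let u' : UniformSpace α := UniformSpace.ofCore
    { uniformity := f
      refl := le_iInf fun n => principal_mono.2 <| SetRel.id_subset_iff.2 ⟨fun x =>
        refl_mem_uniformity (hVmem n)⟩
      symm := by
        rw [hf]
        refine tendsto_iInf.2 fun n => tendsto_iInf' n ?_
        exact tendsto_principal_principal.2 fun p hp => (hVsymm n).symm _ _ hp
      comp := le_iInf fun n => le_principal_iff.2 <|
        mem_of_superset (mem_lift' (mem_iInf_of_mem (n + 1) (mem_principal_self _)))
          (hVcomp n) }
  have hu'f : @uniformity α u' = f := rfl
  have hcg : IsCountablyGenerated (@uniformity α u') := by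
    rw [hu'f]
    exact hbasis.isCountablyGenerated
  obtain ⟨I, hI⟩ := @UniformSpace.metrizable_uniformity α u' hcg
  have hIu : @uniformity α I.toUniformSpace = f := by rw [hI]; rfl
  have hdistmem : ∀ ε : ℝ, 0 < ε → {p : α × α | @dist α I.toDist p.1 p.2 < ε} ∈ f := by
    intro ε hε
    rw [← hIu]
    exact @Metric.dist_mem_uniformity α I ε hε
  have hV0f : (V 0).1 ∈ f := mem_iInf_of_mem 0 (mem_principal_self _)
  obtain ⟨ε, hε, hball⟩ := (@Metric.mem_uniformity_dist α I _).mp (hIu ▸ hV0f)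
  refine ⟨fun x y => @dist α I.toDist x y / ε, ⟨⟨?_, ?_, ?_⟩, ?_⟩, ?_⟩
  · intro x; beta_reduce; rw [@dist_self α I]; simp
  · intro x y; beta_reduce; rw [@dist_comm α I]
  · intro x y z
    beta_reduce
    rw [← add_div, div_le_div_iff_of_pos_right hε]
    exact @dist_triangle α I x y z
  · intro δ hδ
    have : {p : α × α | @dist α I.toDist p.1 p.2 / ε < δ}
        = {p : α × α | @dist α I.toDist p.1 p.2 < δ * ε} := by
      ext p; simp only [Set.mem_setOf_eq, div_lt_iff₀ hε]
    rw [this]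
    exact hfle _ (hdistmem _ (by positivity))
  · intro p hp
    simp only [Set.mem_setOf_eq, div_lt_one hε] at hp
    exact hV0E' (hball hp)

namespace UniformTower

/-- Every entourage of the direct-limit uniformity is an entourage of a single admissible
uniformity. -/
lemma exists_single {X : Type u} (T : UniformTower X) {E : Set (X × X)}
    (hE : E ∈ @uniformity X T.dirLim) :
    ∃ u' : UniformSpace X,
      (∀ n, UniformContinuous[T.u n, u'] (Subtype.val : T.S n → X)) ∧
      E ∈ @uniformity X u' := by
  set C := {v : UniformSpace X | ∀ n, UniformContinuous[T.u n, v] (Subtype.val : T.S n → X)}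
    with hC
  haveI hne : Nonempty C := ⟨⟨⊤, fun n => le_top⟩⟩
  have hdir : Directed (· ≥ ·) fun v : C => @uniformity X v.1 := by
    intro v w
    exact ⟨⟨v.1 ⊓ w.1, fun n => UniformContinuous.inf_rng (v.2 n) (w.2 n)⟩,
      inf_le_left, inf_le_right⟩
  have hrw : @uniformity X T.dirLim = ⨅ v : C, @uniformity X v.1 := by
    have h : T.dirLim = ⨅ v : C, (v.1 : UniformSpace X) := by
      unfold dirLim
      rw [sInf_eq_iInf']
    rw [h, iInf_uniformity]
  rw [hrw] at hE
  obtain ⟨v, hv⟩ := (Filter.mem_iInf_of_directed hdir E).mp hE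
  exact ⟨v.1, v.2, hv⟩

end UniformTower


/-- For towers `(X_n)` and `(Y_n)` of uniform spaces, if `(P_n)` is the tower on `X × Y`
whose `n`-th stage is `X_n × Y_n` with the product uniformity, then the identity map
`u-lim (X_n × Y_n) → (u-lim X_n) × (u-lim Y_n)` is a homeomorphism, i.e. the topology
of the uniform direct limit of the product tower coincides with the product topology of the
topologies of the uniform direct limits. -/
theorem statement1 {X Y : Type u} (TX : UniformTower X) (TY : UniformTower Y)
    (TP : UniformTower (X × Y))
    (hS : ∀ n, TP.S n = TX.S n ×ˢ TY.S n)
    (hu : ∀ n, TP.u n = UniformSpace.comap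
      (fun p : TP.S n =>
        ((⟨p.val.1, (Set.mem_prod.mp (show p.val ∈ TX.S n ×ˢ TY.S n by rw [← hS n]; exact p.property)).1⟩ : TX.S n),
         (⟨p.val.2, (Set.mem_prod.mp (show p.val ∈ TX.S n ×ˢ TY.S n by rw [← hS n]; exact p.property)).2⟩ : TY.S n)))
      (@instUniformSpaceProd (TX.S n) (TY.S n) (TX.u n) (TY.u n))) :
    TP.dirLim.toTopologicalSpace =
      @instTopologicalSpaceProd X Y TX.dirLim.toTopologicalSpace TY.dirLim.toTopologicalSpace := by
  classical
  -- the easy inequality: the direct limit uniformity is finer than the product uniformity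
  have hprodmem : (@instUniformSpaceProd X Y TX.dirLim TY.dirLim) ∈
      {u' : UniformSpace (X × Y) |
        ∀ n, @UniformContinuous _ _ (TP.u n) u' (Subtype.val : TP.S n → X × Y)} := by
    intro n
    letI := TX.u n; letI := TY.u n
    letI uX : UniformSpace X := TX.dirLim
    letI uY : UniformSpace Y := TY.dirLim
    have h1 : @UniformContinuous _ _ (TP.u n) (@instUniformSpaceProd _ _ (TX.u n) (TY.u n))
        (fun p : TP.S n =>
          ((⟨p.val.1, (Set.mem_prod.mp (show p.val ∈ TX.S n ×ˢ TY.S n by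
              rw [← hS n]; exact p.property)).1⟩ : TX.S n),
           (⟨p.val.2, (Set.mem_prod.mp (show p.val ∈ TX.S n ×ˢ TY.S n by
              rw [← hS n]; exact p.property)).2⟩ : TY.S n))) := by
      rw [hu n]
      exact uniformContinuous_comap
    have h2 : UniformContinuous (fun q : TX.S n × TY.S n => (((q.1 : X), (q.2 : Y)) : X × Y)) :=
      ((TX.val_uc n).comp uniformContinuous_fst).prodMk ((TY.val_uc n).comp uniformContinuous_snd)
    exact @UniformContinuous.comp _ _ _ (TP.u n)
      (@instUniformSpaceProd _ _ (TX.u n) (TY.u n))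
      (@instUniformSpaceProd X Y TX.dirLim TY.dirLim) _ _ h2 h1
  have easy : TP.dirLim ≤ @instUniformSpaceProd X Y TX.dirLim TY.dirLim := sInf_le hprodmem
  refine le_antisymm (UniformSpace.toTopologicalSpace_mono easy) ?_
  -- the hard inequality
  rw [TopologicalSpace.le_def]
  intro U hU
  letI tX : TopologicalSpace X := TX.dirLim.toTopologicalSpace
  letI tY : TopologicalSpace Y := TY.dirLim.toTopologicalSpace
  rw [isOpen_iff_mem_nhds]
  rintro ⟨x₀, y₀⟩ hp
  have hEnt : {q : (X × Y) × X × Y | q.1 = (x₀, y₀) → q.2 ∈ U} ∈ @uniformity _ TP.dirLim :=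
    (@isOpen_uniformity _ TP.dirLim U).mp hU (x₀, y₀) hp
  obtain ⟨uu, huuC, hEuu⟩ := TP.exists_single hEnt
  obtain ⟨ρ, hρu, hρsub⟩ := exists_unif_pm uu hEuu
  have hρpm : IsPseudometric ρ := hρu.1
  -- uniform continuity data for the two partner pseudometric constructions
  have hucX : ∀ n : ℕ, ∃ m, n ≤ m ∧ y₀ ∈ TY.S m ∧
      UniformContinuous[@instUniformSpaceProd _ _ (TX.u n) (TY.u m), uu]
        (fun p : TX.S n × TY.S m =>
          (fun (a : X) (b : Y) => ((a, b) : X × Y)) p.1.1 p.2.1) := by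
    intro n
    refine ⟨max n (TY.height y₀), le_max_left _ _,
      TY.mono (le_max_right _ _) (TY.mem_S_height y₀), ?_⟩
    set m := max n (TY.height y₀) with hm
    letI := TX.u n; letI := TY.u m; letI := TX.u m; letI := TP.u m; letI := uu
    have e1 : UniformContinuous (fun p : TX.S n × TY.S m =>
        ((Set.inclusion (TX.mono (le_max_left n (TY.height y₀))) p.1, p.2)
          : TX.S m × TY.S m)) :=
      ((TX.incl_uc (le_max_left _ _)).comp uniformContinuous_fst).prodMk uniformContinuous_snd
    have e2 : @UniformContinuous _ _ (@instUniformSpaceProd _ _ (TX.u m) (TY.u m)) (TP.u m)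
        (fun q : TX.S m × TY.S m =>
          (⟨((q.1 : X), (q.2 : Y)), by rw [hS m]; exact Set.mk_mem_prod q.1.2 q.2.2⟩
            : TP.S m)) := by
      rw [hu m]
      exact uniformContinuous_comap' uniformContinuous_id
    have e3 : UniformContinuous[TP.u m, uu] (Subtype.val : TP.S m → X × Y) := huuC m
    have e32 := @UniformContinuous.comp _ _ _
      (@instUniformSpaceProd _ _ (TX.u m) (TY.u m)) (TP.u m) uu _ _ e3 e2
    exact @UniformContinuous.comp _ _ _
      (@instUniformSpaceProd _ _ (TX.u n) (TY.u m))
      (@instUniformSpaceProd _ _ (TX.u m) (TY.u m)) uu _ _ e32 e1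
  have hucY : ∀ n : ℕ, ∃ m, n ≤ m ∧ x₀ ∈ TX.S m ∧
      UniformContinuous[@instUniformSpaceProd _ _ (TY.u n) (TX.u m), uu]
        (fun p : TY.S n × TX.S m =>
          (fun (b : Y) (a : X) => ((a, b) : X × Y)) p.1.1 p.2.1) := by
    intro n
    refine ⟨max n (TX.height x₀), le_max_left _ _,
      TX.mono (le_max_right _ _) (TX.mem_S_height x₀), ?_⟩
    set m := max n (TX.height x₀) with hm
    letI := TY.u n; letI := TX.u m; letI := TY.u m; letI := TP.u m; letI := uu
    have e1 : UniformContinuous (fun p : TY.S n × TX.S m =>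
        ((p.2, Set.inclusion (TY.mono (le_max_left n (TX.height x₀))) p.1)
          : TX.S m × TY.S m)) :=
      uniformContinuous_snd.prodMk ((TY.incl_uc (le_max_left _ _)).comp uniformContinuous_fst)
    have e2 : @UniformContinuous _ _ (@instUniformSpaceProd _ _ (TX.u m) (TY.u m)) (TP.u m)
        (fun q : TX.S m × TY.S m =>
          (⟨((q.1 : X), (q.2 : Y)), by rw [hS m]; exact Set.mk_mem_prod q.1.2 q.2.2⟩
            : TP.S m)) := by
      rw [hu m]
      exact uniformContinuous_comap' uniformContinuous_id
    have e3 : UniformContinuous[TP.u m, uu] (Subtype.val : TP.S m → X × Y) := huuC m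
    have e32 := @UniformContinuous.comp _ _ _
      (@instUniformSpaceProd _ _ (TX.u m) (TY.u m)) (TP.u m) uu _ _ e3 e2
    exact @UniformContinuous.comp _ _ _
      (@instUniformSpaceProd _ _ (TY.u n) (TX.u m))
      (@instUniformSpaceProd _ _ (TX.u m) (TY.u m)) uu _ _ e32 e1
  -- the partner pseudometrics
  set FX := partnerD TX TY ρ (fun (a : X) (b : Y) => ((a, b) : X × Y)) y₀ with hFXdef
  set FY := partnerD TY TX ρ (fun (b : Y) (a : X) => ((a, b) : X × Y)) x₀ with hFYdef
  have hFXu : ∀ n, IsUniformPseudometric (TX.u n) (FX n) :=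
    partnerD_uniform TX TY _ _ hρu hucX
  have hFYu : ∀ n, IsUniformPseudometric (TY.u n) (FY n) :=
    partnerD_uniform TY TX _ _ hρu hucY
  have hFXm : TX.MonotoneSeq FX := partnerD_monotoneSeq TX TY _ _ hρpm
  have hFYm : TY.MonotoneSeq FY := partnerD_monotoneSeq TY TX _ _ hρpm
  have hFXpm : ∀ n, IsPseudometric (FX n) := fun n => (hFXu n).1
  have hFYpm : ∀ n, IsPseudometric (FY n) := fun n => (hFYu n).1
  -- the two neighborhoods
  have hVent : {q : X × X | TX.limD FX q.1 q.2 < 1 / 2} ∈ @uniformity X TX.dirLim :=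
    TX.limD_mem_dirLim hFXu hFXm (by norm_num)
  have hWent : {q : Y × Y | TY.limD FY q.1 q.2 < 1 / 2} ∈ @uniformity Y TY.dirLim :=
    TY.limD_mem_dirLim hFYu hFYm (by norm_num)
  have hVnhds : {x : X | TX.limD FX x₀ x < 1 / 2} ∈ @nhds X tX x₀ := by
    rw [show (@nhds X tX x₀) = (@uniformity X TX.dirLim).comap (Prod.mk x₀) from
      @nhds_eq_comap_uniformity X TX.dirLim x₀]
    exact Filter.mem_comap.mpr ⟨_, hVent, fun x hx => hx⟩
  have hWnhds : {y : Y | TY.limD FY y₀ y < 1 / 2} ∈ @nhds Y tY y₀ := by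
    rw [show (@nhds Y tY y₀) = (@uniformity Y TY.dirLim).comap (Prod.mk y₀) from
      @nhds_eq_comap_uniformity Y TY.dirLim y₀]
    exact Filter.mem_comap.mpr ⟨_, hWent, fun y hy => hy⟩
  have hsub : {x : X | TX.limD FX x₀ x < 1 / 2} ×ˢ {y : Y | TY.limD FY y₀ y < 1 / 2} ⊆ U := by
    rintro ⟨x, y⟩ ⟨hxV, hyW⟩
    simp only [Set.mem_setOf_eq] at hxV hyW
    rw [TX.limD_symm hFXpm x₀ x] at hxV
    rw [TY.limD_symm hFYpm y₀ y] at hyW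
    obtain ⟨r, hrmem, hrlt⟩ := exists_lt_of_csInf_lt (TX.chainSums_nonempty (d := FX) x x₀) hxV
    obtain ⟨m, c, hc0, hcm, rfl⟩ := hrmem
    obtain ⟨s, hsmem, hslt⟩ := exists_lt_of_csInf_lt (TY.chainSums_nonempty (d := FY) y y₀) hyW
    obtain ⟨l, e, he0, hel, rfl⟩ := hsmem
    have hCXnn : ∀ i, 0 ≤ TX.chainD FX (c i) (c (i + 1)) :=
      fun i => TX.chainD_nonneg hFXpm _ _
    have hCYnn : ∀ j, 0 ≤ TY.chainD FY (e j) (e (j + 1)) :=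
      fun j => TY.chainD_nonneg hFYpm _ _
    have hX : ∀ i, i < m → TX.chainD FX (c i) (c (i + 1)) < 1 ∧ ∀ y',
        (y' ∈ TY.S (max (TX.height (c i)) (TX.height (c (i + 1)))) ∨ y' = y₀) →
        min (ρ (c i, y') (c (i + 1), y')) 1 ≤ TX.chainD FX (c i) (c (i + 1)) := by
      intro i hi
      constructor
      · have hle : TX.chainD FX (c i) (c (i + 1))
            ≤ ∑ j ∈ Finset.range m, TX.chainD FX (c j) (c (j + 1)) :=
          Finset.single_le_sum (fun j _ => hCXnn j) (Finset.mem_range.mpr hi)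
        linarith
      · intro y' hy'
        have hmem : y' ∈ TY.S (max (TX.height (c i)) (TX.height (c (i + 1)))) ∪ {y₀} := by
          rcases hy' with h | h
          · exact Set.mem_union_left _ h
          · exact Set.mem_union_right _ (by simp [h])
        exact le_partnerD TX TY (fun (a : X) (b : Y) => ((a, b) : X × Y)) y₀ hρpm
          (n := max (TX.height (c i)) (TX.height (c (i + 1))))
          (a := ⟨c i, TX.mono (le_max_left _ _) (TX.mem_S_height (c i))⟩)
          (a' := ⟨c (i + 1), TX.mono (le_max_right _ _) (TX.mem_S_height (c (i + 1)))⟩) hmem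
    have hY : ∀ j, j < l → TY.chainD FY (e j) (e (j + 1)) < 1 ∧ ∀ x',
        (x' ∈ TX.S (max (TY.height (e j)) (TY.height (e (j + 1)))) ∨ x' = x₀) →
        min (ρ (x', e j) (x', e (j + 1))) 1 ≤ TY.chainD FY (e j) (e (j + 1)) := by
      intro j hj
      constructor
      · have hle : TY.chainD FY (e j) (e (j + 1))
            ≤ ∑ i ∈ Finset.range l, TY.chainD FY (e i) (e (i + 1)) :=
          Finset.single_le_sum (fun i _ => hCYnn i) (Finset.mem_range.mpr hj)
        linarith
      · intro x' hx'
        have hmem : x' ∈ TX.S (max (TY.height (e j)) (TY.height (e (j + 1)))) ∪ {x₀} := by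
          rcases hx' with h | h
          · exact Set.mem_union_left _ h
          · exact Set.mem_union_right _ (by simp [h])
        exact le_partnerD TY TX (fun (b : Y) (a : X) => ((a, b) : X × Y)) x₀ hρpm
          (n := max (TY.height (e j)) (TY.height (e (j + 1))))
          (a := ⟨e j, TY.mono (le_max_left _ _) (TY.mem_S_height (e j))⟩)
          (a' := ⟨e (j + 1), TY.mono (le_max_right _ _) (TY.mem_S_height (e (j + 1)))⟩) hmem
    have hbound := sched TX TY hρpm x₀ y₀ (m + l) m l le_rfl c e
      (fun i => TX.chainD FX (c i) (c (i + 1))) (fun j => TY.chainD FY (e j) (e (j + 1)))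
      hcm hel hX hY
    rw [hc0, he0] at hbound
    have hlt1 : ρ ((x₀, y₀) : X × Y) ((x, y) : X × Y) < 1 := by
      rw [hρpm.2.1]
      linarith
    have hmemE : (((x₀, y₀), (x, y)) : (X × Y) × (X × Y))
        ∈ {p : (X × Y) × X × Y | ρ p.1 p.2 < 1} := hlt1
    exact hρsub hmemE rfl
  refine Filter.mem_of_superset ?_ hsub
  rw [nhds_prod_eq]
  exact Filter.prod_mem_prod hVnhds hWnhds
end

section
/- For a uniform space X and any tower (Y_n)_{n∈ω} of uniform spaces, the identity map u-lim (X × Y_n) → X × (u-lim Y_n) is a homeomorphism, where each X × Y_n carries the product uniformity and the right-hand side carries the product topology. -/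
open Set Filter Topology
open scoped Uniformity
open scoped SetRel

universe u

noncomputable def wgt (k : ℕ) : ℝ := (2:ℝ)⁻¹ ^ k

lemma wgt_pos (k : ℕ) : 0 < wgt k := pow_pos (by norm_num) _

lemma wgt_antitone {m n : ℕ} (h : m ≤ n) : wgt n ≤ wgt m :=
  pow_le_pow_of_le_one (by norm_num) (by norm_num) h

lemma lt_of_wgt_lt {m n : ℕ} (h : wgt m < wgt n) : n < m := by
  by_contra hc
  exact absurd (wgt_antitone (not_lt.mp hc)) (not_le.mpr h)

lemma wgt_succ_add (k : ℕ) : wgt (k+1) + wgt (k+1) = wgt k := by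
  simp only [wgt, pow_succ]
  ring

lemma exists_wgt_lt {ε : ℝ} (hε : 0 < ε) : ∃ k, wgt k < ε := by
  obtain ⟨k, hk⟩ := exists_pow_lt_of_lt_one hε (by norm_num : (2:ℝ)⁻¹ < 1)
  exact ⟨k, hk⟩

lemma chain_lemma {Z : Type*} (E : ℕ → Set (Z × Z))
    (hmono : ∀ k, E (k+1) ⊆ E k)
    (hdiag : ∀ k (z : Z), (z, z) ∈ E k)
    (hcomp : ∀ k (a b c d : Z), (a,b) ∈ E (k+1) → (b,c) ∈ E (k+1) → (c,d) ∈ E (k+1) →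
      (a,d) ∈ E k) :
    ∀ (m : ℕ) (z : ℕ → Z) (ki : ℕ → ℕ) (k : ℕ),
      (∀ i < m, (z i, z (i+1)) ∈ E (ki i)) →
      (∑ i ∈ Finset.range m, wgt (ki i)) < wgt k → (z 0, z m) ∈ E k := by
  have hEle : ∀ {a b : ℕ}, a ≤ b → E b ⊆ E a := by
    intro a b hab
    induction hab with
    | refl => exact subset_rfl
    | step h ih => exact fun p hp => ih (hmono _ hp)
  intro m
  induction m using Nat.strong_induction_on with
  | _ m IH =>
    intro z ki k hstep hsum
    match m with
    | 0 => exact hdiag k (z 0)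
    | (m' + 1) =>
      classical
      set S : ℝ := ∑ i ∈ Finset.range (m'+1), wgt (ki i) with hSdef
      have hSnonneg : 0 ≤ S := Finset.sum_nonneg fun i _ => (wgt_pos _).le
      have hShalf : S/2 < wgt (k+1) := by
        have := wgt_succ_add k
        linarith [hsum]
      set P : ℕ → Prop := fun j => (∑ i ∈ Finset.range j, wgt (ki i)) ≤ S/2 with hPdef
      have hP0 : P 0 := by simp [hPdef]; linarith
      set j := Nat.findGreatest P m' with hjdef
      have hjle : j ≤ m' := Nat.findGreatest_le _
      have hPj : P j := Nat.findGreatest_spec (Nat.zero_le m') hP0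
      -- prefix
      have hpre : (z 0, z j) ∈ E (k+1) := by
        apply IH j (Nat.lt_succ_of_le hjle) z ki (k+1)
          (fun i hi => hstep i (lt_of_lt_of_le hi (Nat.le_succ_of_le hjle)))
        exact lt_of_le_of_lt hPj hShalf
      -- middle
      have hmidmem : (z j, z (j+1)) ∈ E (ki j) := hstep j (Nat.lt_succ_of_le hjle)
      have hkij : k + 1 ≤ ki j := by
        have hterm : wgt (ki j) ≤ S := by
          rw [hSdef]
          exact Finset.single_le_sum (fun i _ => (wgt_pos (ki i)).le)
            (Finset.mem_range.mpr (Nat.lt_succ_of_le hjle))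
        have : wgt (ki j) < wgt k := lt_of_le_of_lt hterm hsum
        exact lt_of_wgt_lt this
      have hmid : (z j, z (j+1)) ∈ E (k+1) := hEle hkij hmidmem
      -- suffix
      have hsuf : (z (j+1), z (m'+1)) ∈ E (k+1) := by
        have hL : m' - j < m' + 1 := by omega
        have h1 : (z (j+1+0), z (j+1+(m'-j))) ∈ E (k+1) := by
          apply IH (m'-j) hL (fun i => z (j+1+i)) (fun i => ki (j+1+i)) (k+1)
          · intro i hi
            have : j+1+i < m'+1 := by omega
            exact hstep (j+1+i) this
          · have hsufsum : (∑ i ∈ Finset.range (m'-j), wgt (ki (j+1+i)))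
                = ∑ i ∈ Finset.Ico (j+1) (m'+1), wgt (ki i) := by
              rw [Finset.sum_Ico_eq_sum_range]
              have hnm : m' + 1 - (j+1) = m' - j := by omega
              rw [hnm]
            rw [hsufsum]
            rcases Nat.lt_or_ge j m' with hjm | hjm
            · have hnotP : ¬ P (j+1) := Nat.findGreatest_is_greatest (Nat.lt_succ_self j) hjm
              have hgt : S/2 < ∑ i ∈ Finset.range (j+1), wgt (ki i) := by
                by_contra hc
                exact hnotP (not_lt.mp hc)
              have hsplit := Finset.sum_range_add_sum_Ico (fun i => wgt (ki i))
                (show j+1 ≤ m'+1 by omega)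
              have : (∑ i ∈ Finset.Ico (j+1) (m'+1), wgt (ki i)) ≤ S/2 := by linarith
              exact lt_of_le_of_lt this hShalf
            · have hjm' : j = m' := le_antisymm hjle hjm
              have : Finset.Ico (j+1) (m'+1) = ∅ := by
                rw [Finset.Ico_eq_empty_iff]
                omega
              rw [this, Finset.sum_empty]
              exact wgt_pos _
        have hjm1 : j + 1 + (m' - j) = m' + 1 := by omega
        rw [hjm1] at h1
        simpa using h1
      exact hcomp k _ _ _ _ hpre hmid hsuf

section SigmaConstruction

variable {Y : Type u} (TY : UniformTower Y)

lemma UniformTower.height_le_s2 {y : Y} {n : ℕ} (h : y ∈ TY.S n) : TY.height y ≤ n :=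
  Nat.sInf_le h

lemma UniformTower.u_eq_comap_of_le {m n : ℕ} (h : m ≤ n) :
    TY.u m = UniformSpace.comap (Set.inclusion (TY.mono h)) (TY.u n) := by
  induction h with
  | refl =>
    have : Set.inclusion (TY.mono (le_refl m)) = id := funext fun x => rfl
    rw [this, uniformSpace_comap_id, id]
  | @step n hmn ih =>
    have hcomp : Set.inclusion (TY.mono (Nat.le_succ n)) ∘ Set.inclusion (TY.mono hmn)
        = Set.inclusion (TY.mono (Nat.le_succ_of_le hmn)) := by
      rw [Set.inclusion_comp_inclusion]
    rw [ih, TY.compat n, ← UniformSpace.comap_comap, hcomp]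

lemma UniformTower.dirLim_uc (n : ℕ) :
    UniformContinuous[TY.u n, TY.dirLim] (Subtype.val : TY.S n → Y) := by
  rw [UniformTower.dirLim, uniformContinuous_sInf_rng]
  exact fun u hu => hu n

variable (B : (n : ℕ) → ℕ → Set (TY.S n × TY.S n))

/-- step cost function built from a double family of relations -/
noncomputable def dB : (n : ℕ) → TY.S n → TY.S n → ℝ :=
  fun n a b => sInf ({1} ∪ {r : ℝ | ∃ k, r = wgt k ∧ (a, b) ∈ B n k})

lemma dB_nonempty (n : ℕ) (a b : TY.S n) :
    ({1} ∪ {r : ℝ | ∃ k, r = wgt k ∧ (a, b) ∈ B n k}).Nonempty := ⟨1, Or.inl rfl⟩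

lemma dB_bdd (n : ℕ) (a b : TY.S n) :
    BddBelow ({1} ∪ {r : ℝ | ∃ k, r = wgt k ∧ (a, b) ∈ B n k}) := by
  refine ⟨0, fun r hr => ?_⟩
  rcases hr with h1 | ⟨k, hk, _⟩
  · simp only [Set.mem_singleton_iff] at h1; rw [h1]; norm_num
  · rw [hk]; exact (wgt_pos k).le

lemma dB_nonneg (n : ℕ) (a b : TY.S n) : 0 ≤ dB TY B n a b := by
  apply Real.sInf_nonneg
  intro r hr
  rcases hr with h1 | ⟨k, hk, _⟩
  · simp only [Set.mem_singleton_iff] at h1; rw [h1]; norm_num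
  · rw [hk]; exact (wgt_pos k).le

lemma dB_le_of_mem {n k : ℕ} {a b : TY.S n} (h : (a, b) ∈ B n k) :
    dB TY B n a b ≤ wgt k :=
  csInf_le (dB_bdd TY B n a b) (Or.inr ⟨k, rfl, h⟩)

lemma dB_symm (hsymm : ∀ n k, SetRel.IsSymm (B n k)) (n : ℕ) (a b : TY.S n) :
    dB TY B n a b = dB TY B n b a := by
  unfold dB
  congr 1
  ext r
  simp only [Set.mem_union, Set.mem_singleton_iff, Set.mem_setOf_eq]
  constructor
  · rintro (h | ⟨k, hk, hmem⟩)
    · exact Or.inl h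
    · exact Or.inr ⟨k, hk, (hsymm n k).symm _ _ hmem⟩
  · rintro (h | ⟨k, hk, hmem⟩)
    · exact Or.inl h
    · exact Or.inr ⟨k, hk, (hsymm n k).symm _ _ hmem⟩

lemma dB_extract {n : ℕ} {a b : TY.S n} {r : ℝ} (h : dB TY B n a b < r) :
    (1:ℝ) < r ∨ ∃ k, wgt k < r ∧ (a, b) ∈ B n k := by
  obtain ⟨x, hx, hxr⟩ := exists_lt_of_csInf_lt (dB_nonempty TY B n a b) h
  rcases hx with h1 | ⟨k, hk, hmem⟩
  · simp only [Set.mem_singleton_iff] at h1; left; rw [← h1]; exact hxr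
  · right; exact ⟨k, by rw [← hk]; exact hxr, hmem⟩

/-- generic congruence for `d` at equal indices -/
lemma dB_index_congr {n m : ℕ} (h : n = m) (a b : Y)
    (ha : a ∈ TY.S n) (hb : b ∈ TY.S n) (ha' : a ∈ TY.S m) (hb' : b ∈ TY.S m) :
    dB TY B n ⟨a, ha⟩ ⟨b, hb⟩ = dB TY B m ⟨a, ha'⟩ ⟨b, hb'⟩ := by
  subst h; rfl

section LimDGeneric

variable (d : (n : ℕ) → TY.S n → TY.S n → ℝ)
variable (hd0 : ∀ n (a b : TY.S n), 0 ≤ d n a b)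
include hd0

lemma chainD_nonneg (x y : Y) : 0 ≤ TY.chainD d x y := hd0 _ _ _

lemma limD_mem_single (x y : Y) :
    TY.chainD d x y ∈ {r : ℝ | ∃ (m : ℕ) (c : ℕ → Y), c 0 = x ∧ c m = y ∧
      r = ∑ i ∈ Finset.range m, TY.chainD d (c i) (c (i + 1))} := by
  refine ⟨1, fun i => if i = 0 then x else y, by simp, by simp, ?_⟩
  rw [Finset.sum_range_one]
  simp

lemma limD_nonempty (x y : Y) :
    {r : ℝ | ∃ (m : ℕ) (c : ℕ → Y), c 0 = x ∧ c m = y ∧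
      r = ∑ i ∈ Finset.range m, TY.chainD d (c i) (c (i + 1))}.Nonempty :=
  ⟨_, limD_mem_single TY d hd0 x y⟩

lemma limD_bdd (x y : Y) :
    BddBelow {r : ℝ | ∃ (m : ℕ) (c : ℕ → Y), c 0 = x ∧ c m = y ∧
      r = ∑ i ∈ Finset.range m, TY.chainD d (c i) (c (i + 1))} := by
  refine ⟨0, fun r hr => ?_⟩
  obtain ⟨m, c, _, _, hr⟩ := hr
  rw [hr]
  exact Finset.sum_nonneg fun i _ => hd0 _ _ _

lemma limD_nonneg (x y : Y) : 0 ≤ TY.limD d x y := by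
  apply Real.sInf_nonneg
  intro r hr
  obtain ⟨m, c, _, _, hr⟩ := hr
  rw [hr]
  exact Finset.sum_nonneg fun i _ => hd0 _ _ _

lemma limD_le_chainD (x y : Y) : TY.limD d x y ≤ TY.chainD d x y :=
  csInf_le (limD_bdd TY d hd0 x y) (limD_mem_single TY d hd0 x y)

lemma limD_self (x : Y) : TY.limD d x x = 0 := by
  refine le_antisymm ?_ (limD_nonneg TY d hd0 x x)
  apply csInf_le (limD_bdd TY d hd0 x x)
  exact ⟨0, fun _ => x, rfl, rfl, by simp⟩

lemma limD_triangle (x y z : Y) :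
    TY.limD d x z ≤ TY.limD d x y + TY.limD d y z := by
  set Sxy := {r : ℝ | ∃ (m : ℕ) (c : ℕ → Y), c 0 = x ∧ c m = y ∧
      r = ∑ i ∈ Finset.range m, TY.chainD d (c i) (c (i + 1))} with hSxy
  set Syz := {r : ℝ | ∃ (m : ℕ) (c : ℕ → Y), c 0 = y ∧ c m = z ∧
      r = ∑ i ∈ Finset.range m, TY.chainD d (c i) (c (i + 1))} with hSyz
  have key : ∀ r1 ∈ Sxy, ∀ r2 ∈ Syz, TY.limD d x z ≤ r1 + r2 := by
    rintro r1 ⟨m1, c1, h10, h1m, h1r⟩ r2 ⟨m2, c2, h20, h2m, h2r⟩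
    apply csInf_le (limD_bdd TY d hd0 x z)
    refine ⟨m1 + m2, fun i => if i < m1 then c1 i else c2 (i - m1), ?_, ?_, ?_⟩
    · by_cases h : 0 < m1
      · simp [h, h10]
      · have hm1 : m1 = 0 := by omega
        simp only [hm1, Nat.lt_irrefl, if_false]
        simp only [Nat.sub_zero]
        rw [h20, ← h1m, hm1, h10]
    · have : ¬ (m1 + m2 < m1) := by omega
      simp only [this, if_false]
      rw [Nat.add_sub_cancel_left, h2m]
    · rw [h1r, h2r, ← Finset.sum_range_add_sum_Ico _ (Nat.le_add_right m1 m2),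
        Finset.sum_Ico_eq_sum_range]
      have hsub : m1 + m2 - m1 = m2 := Nat.add_sub_cancel_left m1 m2
      rw [hsub]
      congr 1
      · apply Finset.sum_congr rfl
        intro i hi
        have hi' : i < m1 := Finset.mem_range.mp hi
        have e1 : (if i < m1 then c1 i else c2 (i - m1)) = c1 i := if_pos hi'
        have e2 : (if i + 1 < m1 then c1 (i+1) else c2 (i + 1 - m1)) = c1 (i+1) := by
          by_cases h2 : i + 1 < m1
          · exact if_pos h2
          · have : i + 1 = m1 := by omega
            rw [if_neg h2, this, Nat.sub_self, h20, ← h1m, ← this]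
        dsimp only
        rw [e1, e2]
      · apply Finset.sum_congr rfl
        intro i hi
        have e1 : (if m1 + i < m1 then c1 (m1+i) else c2 (m1 + i - m1)) = c2 i := by
          rw [if_neg (by omega), Nat.add_sub_cancel_left]
        have e2 : (if m1 + i + 1 < m1 then c1 (m1+i+1) else c2 (m1 + i + 1 - m1))
            = c2 (i+1) := by
          rw [if_neg (by omega)]
          congr 1
          omega
        dsimp only
        rw [e1, e2]
  have h1 : ∀ r1 ∈ Sxy, TY.limD d x z - r1 ≤ TY.limD d y z := by
    intro r1 hr1
    apply le_csInf (limD_nonempty TY d hd0 y z)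
    intro r2 hr2
    linarith [key r1 hr1 r2 hr2]
  have h2 : TY.limD d x z - TY.limD d y z ≤ TY.limD d x y := by
    apply le_csInf (limD_nonempty TY d hd0 x y)
    intro r1 hr1
    linarith [h1 r1 hr1]
  linarith

lemma limD_lt_extract {x y : Y} {r : ℝ} (h : TY.limD d x y < r) :
    ∃ (m : ℕ) (c : ℕ → Y), c 0 = x ∧ c m = y ∧
      (∑ i ∈ Finset.range m, TY.chainD d (c i) (c (i + 1))) < r := by
  obtain ⟨r', ⟨m, c, h0, hm, hr⟩, hlt⟩ :=
    exists_lt_of_csInf_lt (limD_nonempty TY d hd0 x y) h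
  exact ⟨m, c, h0, hm, by rw [← hr]; exact hlt⟩

variable (hdsymm : ∀ n (a b : TY.S n), d n a b = d n b a)
variable (hdcongr : ∀ {n m : ℕ}, n = m → ∀ (a b : Y)
    (ha : a ∈ TY.S n) (hb : b ∈ TY.S n) (ha' : a ∈ TY.S m) (hb' : b ∈ TY.S m),
    d n ⟨a, ha⟩ ⟨b, hb⟩ = d m ⟨a, ha'⟩ ⟨b, hb'⟩)
include hdsymm hdcongr

lemma chainD_symm (x y : Y) : TY.chainD d x y = TY.chainD d y x := by
  unfold UniformTower.chainD
  rw [hdsymm]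
  exact hdcongr (max_comm _ _) y x _ _ _ _

lemma limD_symm (x y : Y) : TY.limD d x y = TY.limD d y x := by
  have hsub : ∀ (a b : Y),
      {r : ℝ | ∃ (m : ℕ) (c : ℕ → Y), c 0 = a ∧ c m = b ∧
        r = ∑ i ∈ Finset.range m, TY.chainD d (c i) (c (i + 1))} ⊆
      {r : ℝ | ∃ (m : ℕ) (c : ℕ → Y), c 0 = b ∧ c m = a ∧
        r = ∑ i ∈ Finset.range m, TY.chainD d (c i) (c (i + 1))} := by
    rintro a b r ⟨m, c, h0, hm, hr⟩
    refine ⟨m, fun i => c (m - i), by simp [hm], by simp [h0], ?_⟩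
    rw [hr, ← Finset.sum_range_reflect]
    apply Finset.sum_congr rfl
    intro i hi
    have hi' : i < m := Finset.mem_range.mp hi
    have e1 : m - 1 - i = m - (i+1) := by omega
    have e2 : m - 1 - i + 1 = m - i := by omega
    rw [e2, e1]
    dsimp only
    exact chainD_symm TY d hd0 hdsymm @hdcongr (c (m - (i+1))) (c (m - i))
  unfold UniformTower.limD
  exact le_antisymm (csInf_le_csInf (limD_bdd TY d hd0 x y) (limD_nonempty TY d hd0 y x) (hsub y x))
    (csInf_le_csInf (limD_bdd TY d hd0 y x) (limD_nonempty TY d hd0 x y) (hsub x y))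

end LimDGeneric

end SigmaConstruction

section VLim

variable {Y : Type u} (TY : UniformTower Y)
variable (B : (n : ℕ) → ℕ → Set (TY.S n × TY.S n))
variable (hsymm : ∀ n k, SetRel.IsSymm (B n k))

/-- The limit pseudometric uniformity on `Y` built from the relations `B`. -/
noncomputable def vLim : UniformSpace Y :=
  UniformSpace.ofFun (TY.limD (dB TY B))
    (limD_self TY _ (dB_nonneg TY B))
    (limD_symm TY _ (dB_nonneg TY B) (dB_symm TY B hsymm)
      (fun h a b ha hb ha' hb' => dB_index_congr TY B h a b ha hb ha' hb'))
    (limD_triangle TY _ (dB_nonneg TY B))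
    (fun ε hε => ⟨ε/2, by linarith, fun a ha b hb => by linarith⟩)

lemma vLim_hasBasis :
    𝓤[vLim TY B hsymm].HasBasis (fun ε : ℝ => 0 < ε)
      (fun ε => {p : Y × Y | TY.limD (dB TY B) p.1 p.2 < ε}) :=
  UniformSpace.hasBasis_ofFun ⟨1, one_pos⟩ _ _ _ _ _

lemma vLim_mem {ε : ℝ} (hε : 0 < ε) :
    {p : Y × Y | TY.limD (dB TY B) p.1 p.2 < ε} ∈ 𝓤[vLim TY B hsymm] :=
  (vLim_hasBasis TY B hsymm).mem_of_mem hε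

lemma vLim_uc (hBmem : ∀ n k, B n k ∈ 𝓤[TY.u n]) (n : ℕ) :
    UniformContinuous[TY.u n, vLim TY B hsymm] (Subtype.val : TY.S n → Y) := by
  delta UniformContinuous
  rw [(vLim_hasBasis TY B hsymm).tendsto_right_iff]
  intro ε hε
  obtain ⟨k, hk⟩ := exists_wgt_lt hε
  have hcomap : ∀ m, ∃ C, m ≤ n → C ∈ 𝓤[TY.u n] ∧ ∀ a b : TY.S m,
      ∀ (hmn : m ≤ n), (Set.inclusion (TY.mono hmn) a, Set.inclusion (TY.mono hmn) b) ∈ C →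
        (a, b) ∈ B m k := by
    intro m
    by_cases hm : m ≤ n
    · have hBm := hBmem m k
      rw [TY.u_eq_comap_of_le hm] at hBm
      obtain ⟨C, hC, hCsub⟩ := Filter.mem_comap.mp hBm
      refine ⟨C, fun _ => ⟨hC, fun a b hmn hab => ?_⟩⟩
      exact hCsub hab
    · exact ⟨∅, fun h => absurd h hm⟩
  choose C hC using hcomap
  have hCap : (⋂ m ∈ Finset.range (n+1), C m) ∈ 𝓤[TY.u n] :=
    (Filter.biInter_finset_mem _).mpr
      (fun m hm => ((hC m) (by simpa using Nat.lt_succ_iff.mp (Finset.mem_range.mp hm))).1)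
  refine Filter.mem_of_superset hCap ?_
  rintro ⟨a, b⟩ hp
  simp only [Set.mem_setOf_eq]
  set m := max (TY.height a.val) (TY.height b.val) with hmdef
  have hm_le : m ≤ n := max_le (TY.height_le_s2 a.2) (TY.height_le_s2 b.2)
  set a' : TY.S m := ⟨a.val, TY.mono (le_max_left _ _) (TY.mem_S_height _)⟩ with ha'
  set b' : TY.S m := ⟨b.val, TY.mono (le_max_right _ _) (TY.mem_S_height _)⟩ with hb'
  have hIncl : (Set.inclusion (TY.mono hm_le) a', Set.inclusion (TY.mono hm_le) b') ∈ C m := by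
    have e1 : Set.inclusion (TY.mono hm_le) a' = a := Subtype.ext rfl
    have e2 : Set.inclusion (TY.mono hm_le) b' = b := Subtype.ext rfl
    rw [e1, e2]
    exact Set.mem_iInter₂.mp hp m (Finset.mem_range.mpr (Nat.lt_succ_of_le hm_le))
  have hBmk : (a', b') ∈ B m k := ((hC m) hm_le).2 a' b' hm_le hIncl
  have hchain : TY.chainD (dB TY B) a.val b.val ≤ wgt k := dB_le_of_mem TY B hBmk
  calc TY.limD (dB TY B) a.val b.val
      ≤ TY.chainD (dB TY B) a.val b.val := limD_le_chainD TY _ (dB_nonneg TY B) _ _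
    _ ≤ wgt k := hchain
    _ < ε := hk

end VLim

section MainDirections

lemma statement2_easy {X Y : Type u} (uX : UniformSpace X) (TY : UniformTower Y)
    (TP : UniformTower (X × Y))
    (hS : ∀ n, TP.S n = (Set.univ : Set X) ×ˢ TY.S n)
    (hu : ∀ n, TP.u n = UniformSpace.comap
      (fun p : TP.S n =>
        (p.val.1,
         (⟨p.val.2, (Set.mem_prod.mp
            (show p.val ∈ (Set.univ : Set X) ×ˢ TY.S n by
              rw [← hS n]; exact p.property)).2⟩ : TY.S n)))
      (@instUniformSpaceProd X (TY.S n) uX (TY.u n))) :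
    TP.dirLim.toTopologicalSpace ≤
      @instTopologicalSpaceProd X Y uX.toTopologicalSpace TY.dirLim.toTopologicalSpace := by
  have hmem : (∀ n, UniformContinuous[TP.u n,
      UniformSpace.comap Prod.fst uX ⊓ UniformSpace.comap Prod.snd TY.dirLim]
      (Subtype.val : TP.S n → X × Y)) := by
    intro n
    letI : UniformSpace X := uX
    letI : UniformSpace (TY.S n) := TY.u n
    have h1 : UniformContinuous[TP.u n, uX] (fun p : TP.S n => (p.val).1) := by
      rw [hu n]
      refine @UniformContinuous.comp (TP.S n) (X × TY.S n) X
        (UniformSpace.comap _ (@instUniformSpaceProd X (TY.S n) uX (TY.u n)))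
        (@instUniformSpaceProd X (TY.S n) uX (TY.u n)) uX Prod.fst _
        (@uniformContinuous_fst X (TY.S n) uX (TY.u n)) uniformContinuous_comap
    have h2 : UniformContinuous[TP.u n, TY.dirLim] (fun p : TP.S n => (p.val).2) := by
      rw [hu n]
      refine @UniformContinuous.comp (TP.S n) (TY.S n) Y
        (UniformSpace.comap _ (@instUniformSpaceProd X (TY.S n) uX (TY.u n))) (TY.u n) TY.dirLim
        Subtype.val _ (TY.dirLim_uc n)
        (@UniformContinuous.comp (TP.S n) (X × TY.S n) (TY.S n)
          (UniformSpace.comap _ (@instUniformSpaceProd X (TY.S n) uX (TY.u n)))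
          (@instUniformSpaceProd X (TY.S n) uX (TY.u n)) (TY.u n)
          Prod.snd _ (@uniformContinuous_snd X (TY.S n) uX (TY.u n)) uniformContinuous_comap)
    exact UniformContinuous.inf_rng
      (uniformContinuous_comap' (u := TP.u n) (v := uX) h1)
      (uniformContinuous_comap' (u := TP.u n) (v := TY.dirLim) h2)
  have hle : TP.dirLim ≤
      UniformSpace.comap Prod.fst uX ⊓ UniformSpace.comap Prod.snd TY.dirLim :=
    sInf_le hmem
  exact UniformSpace.toTopologicalSpace_mono hle

end MainDirections

lemma statement2_hard {X Y : Type u} (uX : UniformSpace X) (TY : UniformTower Y)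
    (TP : UniformTower (X × Y))
    (hS : ∀ n, TP.S n = (Set.univ : Set X) ×ˢ TY.S n)
    (hu : ∀ n, TP.u n = UniformSpace.comap
      (fun p : TP.S n =>
        (p.val.1,
         (⟨p.val.2, (Set.mem_prod.mp
            (show p.val ∈ (Set.univ : Set X) ×ˢ TY.S n by
              rw [← hS n]; exact p.property)).2⟩ : TY.S n)))
      (@instUniformSpaceProd X (TY.S n) uX (TY.u n))) :
    @instTopologicalSpaceProd X Y uX.toTopologicalSpace TY.dirLim.toTopologicalSpace ≤
      TP.dirLim.toTopologicalSpace := by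
  -- membership of a point of the product tower at any stage containing the Y-part
  have hmemS : ∀ (n : ℕ) (x : X) (y : Y), y ∈ TY.S n → (x, y) ∈ TP.S n := by
    intro n x y hy
    rw [hS n]
    exact ⟨Set.mem_univ x, hy⟩
  refine (isOpen_implies_isOpen_iff).mp ?_
  intro s hs
  rw [@isOpen_iff_mem_nhds (X × Y)
    (@instTopologicalSpaceProd X Y uX.toTopologicalSpace TY.dirLim.toTopologicalSpace) s]
  rintro ⟨x, y⟩ hz
  have hsn : s ∈ @nhds _ TP.dirLim.toTopologicalSpace (x, y) := by
    letI := TP.dirLim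
    exact hs.mem_nhds hz
  obtain ⟨E, hE, hEs⟩ := (@UniformSpace.mem_nhds_iff (X × Y) TP.dirLim (x, y) s).mp hsn
  -- a chain of entourages of the direct-limit uniformity
  have hstep : ∀ t : Set ((X × Y) × (X × Y)), ∃ t', t ∈ 𝓤[TP.dirLim] →
      t' ∈ 𝓤[TP.dirLim] ∧ t' ⊆ t ∧ (t' ○ t') ○ t' ⊆ t := by
    intro t
    by_cases ht : t ∈ 𝓤[TP.dirLim]
    · obtain ⟨t', ht', _, hsub⟩ := @comp_comp_symm_mem_uniformity_sets _ TP.dirLim t ht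
      refine ⟨t', fun _ => ⟨ht', fun p hp => ?_, hsub⟩⟩
      exact hsub ⟨p.2, ⟨p.2, (show (p.1, p.2) ∈ t' from hp),
        @refl_mem_uniformity _ TP.dirLim p.2 t' ht'⟩,
        @refl_mem_uniformity _ TP.dirLim p.2 t' ht'⟩
    · exact ⟨∅, fun h => absurd h ht⟩
  choose F hF using hstep
  let Ech : ℕ → Set ((X × Y) × (X × Y)) := fun k => Nat.rec E (fun _ t => F t) k
  have hEchmem : ∀ k, Ech k ∈ 𝓤[TP.dirLim] := by
    intro k
    induction k with
    | zero => exact hE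
    | succ k ih => exact ((hF (Ech k)) ih).1
  have hEchmono : ∀ k, Ech (k+1) ⊆ Ech k := fun k => ((hF (Ech k)) (hEchmem k)).2.1
  have hEchcomp : ∀ k, (Ech (k+1) ○ Ech (k+1)) ○ Ech (k+1) ⊆ Ech k :=
    fun k => ((hF (Ech k)) (hEchmem k)).2.2
  have hEchdiag : ∀ k (z : X × Y), (z, z) ∈ Ech k :=
    fun k z => @refl_mem_uniformity _ TP.dirLim z _ (hEchmem k)
  have hEch0 : Ech 0 = E := rfl
  -- extract product-shaped entourages at each stage
  have hAB : ∀ n k, ∃ A, A ∈ 𝓤[uX] ∧ ∃ Bnk, Bnk ∈ 𝓤[TY.u n] ∧ SetRel.IsSymm Bnk ∧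
      ∀ p q : TP.S n, (p.val.1, q.val.1) ∈ A →
        ((⟨p.val.2, (Set.mem_prod.mp
            (show p.val ∈ (Set.univ : Set X) ×ˢ TY.S n by
              rw [← hS n]; exact p.property)).2⟩ : TY.S n),
         (⟨q.val.2, (Set.mem_prod.mp
            (show q.val ∈ (Set.univ : Set X) ×ˢ TY.S n by
              rw [← hS n]; exact q.property)).2⟩ : TY.S n)) ∈ Bnk →
        (p.val, q.val) ∈ Ech k := by
    intro n k
    have h1 : {p : TP.S n × TP.S n | (p.1.val, p.2.val) ∈ Ech k} ∈ 𝓤[TP.u n] :=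
      (TP.dirLim_uc n) (hEchmem k)
    rw [hu n] at h1
    obtain ⟨G, hG, hGsub⟩ := Filter.mem_comap.mp h1
    obtain ⟨A, hA, B0, hB0, hsub⟩ :=
      @entourageProd_subset X (TY.S n) uX (TY.u n) G hG
    refine ⟨A, hA, SetRel.symmetrize B0, @symmetrize_mem_uniformity _ (TY.u n) _ hB0,
      inferInstance, ?_⟩
    intro p q hpA hpB
    have hmemG : ((fun p : TP.S n =>
        (p.val.1,
         (⟨p.val.2, (Set.mem_prod.mp
            (show p.val ∈ (Set.univ : Set X) ×ˢ TY.S n by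
              rw [← hS n]; exact p.property)).2⟩ : TY.S n))) p,
        (fun p : TP.S n =>
        (p.val.1,
         (⟨p.val.2, (Set.mem_prod.mp
            (show p.val ∈ (Set.univ : Set X) ×ˢ TY.S n by
              rw [← hS n]; exact p.property)).2⟩ : TY.S n))) q) ∈ G :=
      hsub (mem_entourageProd.mpr ⟨hpA, SetRel.symmetrize_subset_self hpB⟩)
    exact hGsub (show (p, q) ∈ _ ⁻¹' G from hmemG)
  choose A hAmem Bf hBmem hBsym hBspec using hAB
  -- the limit pseudometric on Y
  set σ := TY.limD (dB TY Bf) with hσdef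
  have hvle : TY.dirLim ≤ vLim TY Bf hBsym :=
    sInf_le (fun n => vLim_uc TY Bf hBsym hBmem n)
  have hDmem : {p : Y × Y | σ p.1 p.2 < wgt 3} ∈ 𝓤[TY.dirLim] :=
    hvle (vLim_mem TY Bf hBsym (wgt_pos 3))
  -- the product neighborhood
  set n0 := TY.height y with hn0
  have hyn0 : y ∈ TY.S n0 := TY.mem_S_height y
  set U := UniformSpace.ball x (A n0 4) with hU
  set V := UniformSpace.ball y {p : Y × Y | σ p.1 p.2 < wgt 3} with hV
  have hUnhds : U ∈ @nhds X uX.toTopologicalSpace x :=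
    @UniformSpace.ball_mem_nhds X uX x _ (hAmem n0 4)
  have hVnhds : V ∈ @nhds Y TY.dirLim.toTopologicalSpace y :=
    @UniformSpace.ball_mem_nhds Y TY.dirLim y _ hDmem
  -- main inclusion
  have hUV : U ×ˢ V ⊆ UniformSpace.ball (x, y) E := by
    rintro ⟨x', y'⟩ ⟨hxU, hyV⟩
    have hyV' : σ y y' < wgt 3 := hyV
    -- the X-step
    have hstep0 : ((x, y), (x', y)) ∈ Ech 4 := by
      have hp : (x, y) ∈ TP.S n0 := hmemS n0 x y hyn0
      have hq : (x', y) ∈ TP.S n0 := hmemS n0 x' y hyn0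
      have := hBspec n0 4 ⟨(x, y), hp⟩ ⟨(x', y), hq⟩ hxU
        (@refl_mem_uniformity _ (TY.u n0) _ _ (hBmem n0 4))
      exact this
    obtain ⟨m, c, hc0, hcm, hcsum⟩ :=
      limD_lt_extract TY (dB TY Bf) (dB_nonneg TY Bf) hyV'
    -- choose per-step indices
    have hterm_nonneg : ∀ i, 0 ≤ TY.chainD (dB TY Bf) (c i) (c (i+1)) :=
      fun i => dB_nonneg TY Bf _ _ _
    set S' := ∑ i ∈ Finset.range m, TY.chainD (dB TY Bf) (c i) (c (i + 1)) with hS'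
    have hS'0 : 0 ≤ S' := Finset.sum_nonneg fun i _ => hterm_nonneg i
    have hYsum : ∃ ki : ℕ → ℕ, (∀ i < m,
        ((⟨c i, TY.mono (le_max_left _ _) (TY.mem_S_height (c i))⟩ :
            TY.S (max (TY.height (c i)) (TY.height (c (i+1))))),
         (⟨c (i+1), TY.mono (le_max_right _ _) (TY.mem_S_height (c (i+1)))⟩ :
            TY.S (max (TY.height (c i)) (TY.height (c (i+1)))))) ∈
          Bf (max (TY.height (c i)) (TY.height (c (i+1)))) (ki i)) ∧
        (∑ i ∈ Finset.range m, wgt (ki i)) ≤ wgt 3 := by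
      rcases Nat.eq_zero_or_pos m with hm0 | hmpos
      · refine ⟨fun _ => 0, fun i hi => absurd hi (by omega), ?_⟩
        rw [hm0, Finset.sum_range_zero]
        exact (wgt_pos 3).le
      · set sl := (wgt 3 - S') / m with hsl
        have hslpos : 0 < sl := by
          apply div_pos
          · linarith
          · exact_mod_cast hmpos
        have hsle : sl ≤ wgt 3 - S' := by
          rw [hsl]
          apply div_le_self (by linarith)
          exact_mod_cast hmpos
        have hch : ∀ i, ∃ k, i < m →
            wgt k < TY.chainD (dB TY Bf) (c i) (c (i+1)) + sl ∧
            ((⟨c i, TY.mono (le_max_left _ _) (TY.mem_S_height (c i))⟩ :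
              TY.S (max (TY.height (c i)) (TY.height (c (i+1))))),
             (⟨c (i+1), TY.mono (le_max_right _ _) (TY.mem_S_height (c (i+1)))⟩ :
              TY.S (max (TY.height (c i)) (TY.height (c (i+1)))))) ∈
              Bf (max (TY.height (c i)) (TY.height (c (i+1)))) k := by
          intro i
          by_cases hi : i < m
          · have hti : TY.chainD (dB TY Bf) (c i) (c (i+1)) ≤ S' := by
              rw [hS']
              exact Finset.single_le_sum (fun j _ => hterm_nonneg j)
                (Finset.mem_range.mpr hi)
            have hlt : dB TY Bf (max (TY.height (c i)) (TY.height (c (i+1))))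
                ⟨c i, TY.mono (le_max_left _ _) (TY.mem_S_height (c i))⟩
                ⟨c (i+1), TY.mono (le_max_right _ _) (TY.mem_S_height (c (i+1)))⟩
                < TY.chainD (dB TY Bf) (c i) (c (i+1)) + sl := by
              have : dB TY Bf (max (TY.height (c i)) (TY.height (c (i+1))))
                  ⟨c i, TY.mono (le_max_left _ _) (TY.mem_S_height (c i))⟩
                  ⟨c (i+1), TY.mono (le_max_right _ _) (TY.mem_S_height (c (i+1)))⟩
                  = TY.chainD (dB TY Bf) (c i) (c (i+1)) := rfl
              rw [this]
              linarith
            rcases dB_extract TY Bf hlt with h1 | ⟨k, hk, hmem⟩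
            · exfalso
              have hw3 : wgt 3 ≤ 1 := by norm_num [wgt]
              linarith
            · exact ⟨k, fun _ => ⟨hk, hmem⟩⟩
          · exact ⟨0, fun h => absurd h hi⟩
        choose ki hki using hch
        refine ⟨ki, fun i hi => ((hki i) hi).2, ?_⟩
        have hsum_lt : (∑ i ∈ Finset.range m, wgt (ki i)) ≤
            ∑ i ∈ Finset.range m, (TY.chainD (dB TY Bf) (c i) (c (i+1)) + sl) := by
          apply Finset.sum_le_sum
          intro i hi
          exact (((hki i) (Finset.mem_range.mp hi)).1).le
        have hsum_eq : (∑ i ∈ Finset.range m, (TY.chainD (dB TY Bf) (c i) (c (i+1)) + sl))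
            = S' + m * sl := by
          rw [Finset.sum_add_distrib, Finset.sum_const, Finset.card_range, nsmul_eq_mul]
        have hmsl : (m : ℝ) * sl = wgt 3 - S' := by
          rw [hsl]
          field_simp
        rw [hsum_eq, hmsl] at hsum_lt
        linarith [hsum_lt]
    obtain ⟨ki, hkimem, hkisum⟩ := hYsum
    -- the Y-steps
    have hstepY : ∀ i < m, ((x', c i), (x', c (i+1))) ∈ Ech (ki i) := by
      intro i hi
      set ni := max (TY.height (c i)) (TY.height (c (i+1))) with hni
      have hpc : (x', c i) ∈ TP.S ni :=
        hmemS ni x' (c i) (TY.mono (le_max_left _ _) (TY.mem_S_height (c i)))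
      have hqc : (x', c (i+1)) ∈ TP.S ni :=
        hmemS ni x' (c (i+1)) (TY.mono (le_max_right _ _) (TY.mem_S_height (c (i+1))))
      exact hBspec ni (ki i) ⟨(x', c i), hpc⟩ ⟨(x', c (i+1)), hqc⟩
        (@refl_mem_uniformity _ uX x' _ (hAmem ni (ki i))) (hkimem i hi)
    -- assemble the chain
    set z : ℕ → X × Y := fun i => if i = 0 then (x, y) else (x', c (i - 1)) with hzdef
    set kiz : ℕ → ℕ := fun i => if i = 0 then 4 else ki (i - 1) with hkizdef
    have hchainmem : ∀ i < m + 1, (z i, z (i+1)) ∈ Ech (kiz i) := by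
      intro i hi
      match i with
      | 0 =>
        have hz0 : z 0 = (x, y) := rfl
        have hz1 : z 1 = (x', c 0) := rfl
        rw [hz0, hz1, hc0]
        exact hstep0
      | (i' + 1) =>
        have hz1 : z (i' + 1) = (x', c i') := rfl
        have hz2 : z (i' + 2) = (x', c (i' + 1)) := rfl
        have hk : kiz (i' + 1) = ki i' := rfl
        rw [hz1, hz2, hk]
        exact hstepY i' (by omega)
    have hchainsum : (∑ i ∈ Finset.range (m + 1), wgt (kiz i)) < wgt 2 := by
      rw [Finset.sum_range_succ']
      have h1 : ∀ i, kiz (i + 1) = ki i := fun i => rfl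
      have h2 : kiz 0 = 4 := rfl
      simp only [h1, h2]
      have : wgt 4 + wgt 3 < wgt 2 := by
        norm_num [wgt]
      linarith [hkisum]
    have hfinal : (z 0, z (m + 1)) ∈ Ech 2 :=
      chain_lemma Ech hEchmono hEchdiag
        (fun k a b c' d h1 h2 h3 => hEchcomp k ⟨c', ⟨b, h1, h2⟩, h3⟩)
        (m + 1) z kiz 2 hchainmem hchainsum
    have hz0 : z 0 = (x, y) := rfl
    have hzm : z (m + 1) = (x', y') := by
      show (if m + 1 = 0 then (x, y) else (x', c (m + 1 - 1))) = (x', y')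
      rw [if_neg (by omega)]
      simp only [Nat.add_sub_cancel]
      rw [hcm]
    rw [hz0, hzm] at hfinal
    have : ((x, y), (x', y')) ∈ E := by
      rw [← hEch0]
      exact hEchmono 0 (hEchmono 1 hfinal)
    exact this
  -- conclude
  have hprod : U ×ˢ V ∈ @nhds (X × Y)
      (@instTopologicalSpaceProd X Y uX.toTopologicalSpace TY.dirLim.toTopologicalSpace)
      (x, y) := by
    rw [@nhds_prod_eq X Y uX.toTopologicalSpace TY.dirLim.toTopologicalSpace x y]
    exact Filter.prod_mem_prod hUnhds hVnhds
  exact Filter.mem_of_superset hprod (hUV.trans hEs)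

/-- For a uniform space `X` and a tower `(Y_n)` of uniform spaces, if `(P_n)` is the tower on
`X × Y` whose `n`-th stage is `X × Y_n` with the product uniformity, then the identity map
`u-lim (X × Y_n) → X × (u-lim Y_n)` is a homeomorphism, i.e. the topology of the uniform
direct limit of the tower `(X × Y_n)` coincides with the product topology of the topology of
`X` and the topology of `u-lim Y_n`. -/
theorem statement2 {X Y : Type u} (uX : UniformSpace X) (TY : UniformTower Y)
    (TP : UniformTower (X × Y))
    (hS : ∀ n, TP.S n = (Set.univ : Set X) ×ˢ TY.S n)
    (hu : ∀ n, TP.u n = UniformSpace.comap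
      (fun p : TP.S n =>
        (p.val.1,
         (⟨p.val.2, (Set.mem_prod.mp
            (show p.val ∈ (Set.univ : Set X) ×ˢ TY.S n by
              rw [← hS n]; exact p.property)).2⟩ : TY.S n)))
      (@instUniformSpaceProd X (TY.S n) uX (TY.u n))) :
    TP.dirLim.toTopologicalSpace =
      @instTopologicalSpaceProd X Y uX.toTopologicalSpace TY.dirLim.toTopologicalSpace := by
  exact le_antisymm (statement2_easy uX TY TP hS hu) (statement2_hard uX TY TP hS hu)
end

section
/- Let (X_n)_{n∈ω} be a tower of uniform spaces and Y a uniform space. A function f : u-lim X_n → Y is continuous provided that for every n ≥ 1 the restriction f|X_n : X_n → Y is continuous and regular at the subset X_{n-1} ⊆ X_n. -/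
open Set Filter Topology

universe u

/-- A function `f : Z → Y` between uniform spaces is regular at a subset `A ⊆ Z` if for any
entourages `U` of `Y` and `V` of `Z` there is an entourage `W` of `Z` such that every point
`x ∈ B(A;W)` admits a point `a ∈ A` with `(a,x) ∈ V` and `(f x, f a) ∈ U`. -/
def RegularAt {Z Y : Type*} (uZ : UniformSpace Z) (uY : UniformSpace Y)
    (f : Z → Y) (A : Set Z) : Prop :=
  ∀ U ∈ @uniformity Y uY, ∀ V ∈ @uniformity Z uZ, ∃ W ∈ @uniformity Z uZ,
    ∀ x : Z, (∃ a ∈ A, (x, a) ∈ W) → ∃ a ∈ A, (a, x) ∈ V ∧ (f x, f a) ∈ U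


open Uniformity
open scoped SetRel

namespace S4Aux

lemma sum_range_add' (g : ℕ → ℝ) (a b : ℕ) :
    ∑ i ∈ Finset.range (a + b), g i
      = ∑ i ∈ Finset.range a, g i + ∑ i ∈ Finset.range b, g (a + i) := by
  induction b with
  | zero => simp
  | succ b ih =>
      rw [← Nat.add_assoc, Finset.sum_range_succ, ih, Finset.sum_range_succ]
      ring

lemma exists_pow_bracket {w : ℝ} (h0 : 0 < w) (h1 : w < 1) :
    ∃ κ : ℕ, (2⁻¹ : ℝ) ^ (κ + 1) ≤ w ∧ w < (2⁻¹ : ℝ) ^ κ := by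
  classical
  obtain ⟨n, hn⟩ := exists_pow_lt_of_lt_one h0 (by norm_num : (2⁻¹:ℝ) < 1)
  set P : ℕ → Prop := fun j => w < (2⁻¹:ℝ) ^ j with hP
  have h00 : P 0 := by simpa [P] using h1
  set κ := Nat.findGreatest P n with hκ
  have hspec : P κ := Nat.findGreatest_spec (Nat.zero_le n) h00
  have hklt : κ < n := by
    rcases lt_or_eq_of_le (Nat.findGreatest_le (P := P) n) with h | h
    · exact h
    · exfalso
      have : w < (2⁻¹:ℝ) ^ n := by rw [← h]; exact hspec
      exact absurd (lt_trans hn this) (lt_irrefl _)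
  have hgr := Nat.findGreatest_is_greatest (P := P) (n := n) (k := κ + 1)
    (by omega) (by omega)
  exact ⟨κ, le_of_not_gt hgr, hspec⟩

lemma exists_good_seq {Z : Type*} [uZ : UniformSpace Z] (Bnd : ℕ → Set (Z × Z))
    (hB : ∀ k, Bnd k ∈ 𝓤 Z) :
    ∃ H : ℕ → Set (Z × Z), (∀ k, H k ∈ 𝓤 Z) ∧ (∀ k, SetRel.IsSymm (H k)) ∧
      (∀ k, (H (k+1) ○ H (k+1)) ○ H (k+1) ⊆ H k) ∧ (∀ k, H (k+1) ⊆ H k) ∧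
      (∀ k, H k ⊆ Bnd k) := by
  have root : ∀ s : Set (Z×Z), s ∈ 𝓤 Z →
      ∃ t, t ∈ 𝓤 Z ∧ SetRel.IsSymm t ∧ ((t ○ t) ○ t ⊆ s) ∧ t ⊆ s := by
    intro s hs
    obtain ⟨t₁, ht₁, hs₁, hc₁⟩ := comp_symm_mem_uniformity_sets hs
    obtain ⟨t, ht, hst, hc⟩ := comp_symm_mem_uniformity_sets ht₁
    have htt1 : t ⊆ t₁ := fun p hp => hc ⟨p.2, hp, refl_mem_uniformity ht⟩
    refine ⟨t, ht, hst, ?_, ?_⟩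
    · intro p hp
      obtain ⟨z, hz1, hz2⟩ := hp
      obtain ⟨z', hz1', hz2'⟩ := hz1
      exact hc₁ ⟨z, hc ⟨z', hz1', hz2'⟩, htt1 hz2⟩
    · intro p hp
      exact hc₁ ⟨p.2, htt1 hp, refl_mem_uniformity ht₁⟩
  choose! rt h1 h2 h3 h4 using root
  let H : ℕ → Set (Z × Z) := fun k =>
    Nat.rec (rt (Bnd 0)) (fun k ih => rt (ih ∩ Bnd (k+1))) k
  have hmem : ∀ k, H k ∈ 𝓤 Z := by
    intro k
    induction k with
    | zero => exact h1 _ (hB 0)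
    | succ k ih => exact h1 _ (inter_mem ih (hB (k+1)))
  have hsub : ∀ k, H (k+1) ⊆ H k ∩ Bnd (k+1) := by
    intro k
    exact h4 _ (inter_mem (hmem k) (hB (k+1)))
  refine ⟨H, hmem, ?_, ?_, ?_, ?_⟩
  · intro k
    cases k with
    | zero => exact h2 _ (hB 0)
    | succ k => exact h2 _ (inter_mem (hmem k) (hB (k+1)))
  · intro k
    intro p hp
    exact (h3 _ (inter_mem (hmem k) (hB (k+1))) hp).1
  · intro k
    exact fun p hp => (hsub k hp).1
  · intro k
    cases k with
    | zero => exact h4 _ (hB 0)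
    | succ k => exact fun p hp => (hsub k hp).2

lemma chain_endpoint {Z : Type*} {E : ℕ → Set (Z × Z)}
    (hmono : ∀ k, E (k+1) ⊆ E k)
    (htriple : ∀ k, (E (k+1) ○ E (k+1)) ○ E (k+1) ⊆ E k)
    (hrefl : ∀ k k' x y, (x, y) ∈ E k' → (x, x) ∈ E k ∧ (y, y) ∈ E k) :
    ∀ m (c : ℕ → Z) (kk : ℕ → ℕ) (κ : ℕ),
      (∀ i < m, (c i, c (i+1)) ∈ E (kk i)) →
      (∑ i ∈ Finset.range m, (2⁻¹ : ℝ) ^ kk i) < (2⁻¹:ℝ) ^ κ →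
      c 0 = c m ∨ (c 0, c m) ∈ E κ := by
  classical
  have hanti : ∀ a b : ℕ, a ≤ b → E b ⊆ E a := by
    intro a b hab
    induction hab with
    | refl => exact fun _ h => h
    | step _ ih => exact fun p hp => ih (hmono _ hp)
  have hhalf0 : (0:ℝ) < 2⁻¹ := by norm_num
  have hhalf1 : (2⁻¹:ℝ) < 1 := by norm_num
  intro m
  induction m using Nat.strong_induction_on with
  | _ m ih =>
    intro c kk κ hsteps hsum
    rcases Nat.eq_zero_or_pos m with hm | hm
    · subst hm; exact Or.inl rfl
    right
    have hlev : ∀ i < m, κ + 1 ≤ kk i := by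
      intro i hi
      have h1 : (2⁻¹:ℝ) ^ kk i ≤ ∑ j ∈ Finset.range m, (2⁻¹:ℝ) ^ kk j := by
        apply Finset.single_le_sum (f := fun j => (2⁻¹:ℝ) ^ kk j)
        · intro j _; positivity
        · exact Finset.mem_range.mpr hi
      have h2 : (2⁻¹:ℝ) ^ kk i < (2⁻¹:ℝ) ^ κ := lt_of_le_of_lt h1 hsum
      have := (pow_lt_pow_iff_right_of_lt_one₀ hhalf0 hhalf1).mp h2
      omega
    have hreflc : ∀ i ≤ m, (c i, c i) ∈ E (κ+1) := by
      intro i hi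
      rcases Nat.eq_zero_or_pos i with h | h
      · subst h
        exact (hrefl (κ+1) (kk 0) _ _ (hsteps 0 hm)).1
      · have h1 : i - 1 < m := by omega
        have h2 := hsteps (i-1) h1
        have heq : i - 1 + 1 = i := by omega
        rw [heq] at h2
        exact (hrefl (κ+1) (kk (i-1)) _ _ h2).2
    have comp3 : ∀ a b c' d : Z, (a,b) ∈ E (κ+1) → (b,c') ∈ E (κ+1) →
        (c',d) ∈ E (κ+1) → (a,d) ∈ E κ := by
      intro a b c' d hab hbc hcd
      exact htriple κ ⟨c', ⟨b, hab, hbc⟩, hcd⟩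
    have norm : ∀ i j, i ≤ m → (c i = c j ∨ (c i, c j) ∈ E (κ+1)) →
        (c i, c j) ∈ E (κ+1) := by
      intro i j hi h
      rcases h with h | h
      · exact h ▸ hreflc i hi
      · exact h
    set P : ℕ → ℝ := fun j => ∑ i ∈ Finset.range j, (2⁻¹:ℝ) ^ kk i with hPdef
    have hPmono : ∀ a b : ℕ, a ≤ b → P a ≤ P b := by
      intro a b hab
      apply Finset.sum_le_sum_of_subset_of_nonneg (Finset.range_subset_range.mpr hab)
      intro i _ _; positivity
    set Q : ℕ → Prop := fun j => P j < (2⁻¹:ℝ) ^ (κ+1) with hQ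
    have hQ0 : Q 0 := by
      simp only [Q, P, Finset.range_zero, Finset.sum_empty]; positivity
    set i₀ := Nat.findGreatest Q m with hi₀
    have hi₀le : i₀ ≤ m := Nat.findGreatest_le m
    have hi₀spec : Q i₀ := Nat.findGreatest_spec (Nat.zero_le m) hQ0
    rcases lt_or_eq_of_le hi₀le with hi₀lt | hi₀eq
    · -- i₀ < m : prefix, step i₀, suffix
      have hfac1 : (c 0, c i₀) ∈ E (κ+1) :=
        norm 0 i₀ (Nat.zero_le m)
          (ih i₀ hi₀lt c kk (κ+1) (fun i hi => hsteps i (lt_trans hi hi₀lt)) hi₀spec)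
      have hfac2 : (c i₀, c (i₀+1)) ∈ E (κ+1) :=
        hanti (κ+1) (kk i₀) (hlev i₀ hi₀lt) (hsteps i₀ hi₀lt)
      -- suffix
      have hnotQ : ¬ Q (i₀ + 1) :=
        Nat.findGreatest_is_greatest (P := Q) (n := m) (k := i₀ + 1) (by omega) (by omega)
      have hsplit : P m = P (i₀+1) + ∑ i ∈ Finset.range (m - (i₀+1)), (2⁻¹:ℝ) ^ kk (i₀+1+i) := by
        have := sum_range_add' (fun i => (2⁻¹:ℝ) ^ kk i) (i₀+1) (m - (i₀+1))
        rw [show i₀ + 1 + (m - (i₀+1)) = m by omega] at this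
        exact this
      have hsufsum : ∑ i ∈ Finset.range (m - (i₀+1)), (2⁻¹:ℝ) ^ kk (i₀+1+i) < (2⁻¹:ℝ)^(κ+1) := by
        have h1 : P m < (2⁻¹:ℝ)^κ := hsum
        have h2 : (2⁻¹:ℝ)^(κ+1) ≤ P (i₀+1) := le_of_not_gt hnotQ
        have h3 : (2⁻¹:ℝ)^(κ+1) = (2⁻¹:ℝ)^κ * 2⁻¹ := by rw [pow_succ]
        have h4 := hsplit
        rw [h3] at h2 ⊢
        linarith
      have hsufchain : ∀ i < m - (i₀+1),
          ((fun j => c (i₀+1+j)) i, (fun j => c (i₀+1+j)) (i+1)) ∈ E ((fun j => kk (i₀+1+j)) i) := by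
        intro i hi
        have : (c (i₀+1+i), c (i₀+1+i+1)) ∈ E (kk (i₀+1+i)) := hsteps (i₀+1+i) (by omega)
        simpa [Nat.add_assoc] using this
      have hfac3 : (c (i₀+1), c m) ∈ E (κ+1) := by
        have := ih (m - (i₀+1)) (by omega) (fun j => c (i₀+1+j)) (fun j => kk (i₀+1+j))
          (κ+1) hsufchain hsufsum
        have hend : i₀ + 1 + (m - (i₀+1)) = m := by omega
        rcases this with h | h
        · simp only [Nat.add_zero] at h
          rw [hend] at h
          exact h ▸ hreflc (i₀+1) (by omega)
        · simp only [Nat.add_zero] at h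
          rw [hend] at h
          exact h
      exact comp3 _ _ _ _ hfac1 hfac2 hfac3
    · -- i₀ = m : prefix of length m-1, last step, refl
      have hQm : Q m := by rw [hi₀eq] at hi₀spec; exact hi₀spec
      have hfac1 : (c 0, c (m-1)) ∈ E (κ+1) := by
        apply norm 0 (m-1) (Nat.zero_le m)
        apply ih (m-1) (by omega) c kk (κ+1) (fun i hi => hsteps i (by omega))
        exact lt_of_le_of_lt (hPmono (m-1) m (by omega)) hQm
      have hfac2 : (c (m-1), c m) ∈ E (κ+1) := by
        have h2 := hsteps (m-1) (by omega)
        have heq : m - 1 + 1 = m := by omega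
        rw [heq] at h2
        exact hanti (κ+1) (kk (m-1)) (hlev (m-1) (by omega)) h2
      exact comp3 _ _ _ _ hfac1 hfac2 (hreflc m (le_refl m))

end S4Aux


namespace S4Aux

universe v

lemma trace_mem {X : Type v} (T : UniformTower X) {n m : ℕ} (h : n ≤ m)
    {E : Set (↥(T.S m) × ↥(T.S m))} (hE : E ∈ @uniformity _ (T.u m)) :
    {q : ↥(T.S n) × ↥(T.S n) | ∃ (h1 : (q.1 : X) ∈ T.S m) (h2 : (q.2 : X) ∈ T.S m),
      ((⟨q.1, h1⟩ : ↥(T.S m)), (⟨q.2, h2⟩ : ↥(T.S m))) ∈ E} ∈ @uniformity _ (T.u n) := by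
  induction m, h using Nat.le_induction with
  | base =>
      have heq : {q : ↥(T.S n) × ↥(T.S n) | ∃ (h1 : (q.1:X) ∈ T.S n) (h2 : (q.2:X) ∈ T.S n),
          ((⟨q.1, h1⟩ : ↥(T.S n)), (⟨q.2, h2⟩ : ↥(T.S n))) ∈ E} = E := by
        ext q
        constructor
        · rintro ⟨h1, h2, hh⟩; exact hh
        · intro hh; exact ⟨q.1.2, q.2.2, hh⟩
      rw [heq]; exact hE
  | succ m hm ihm =>
      have hmem' : {q : ↥(T.S m) × ↥(T.S m) |
          ∃ (h1 : (q.1:X) ∈ T.S (m+1)) (h2 : (q.2:X) ∈ T.S (m+1)),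
          ((⟨q.1, h1⟩ : ↥(T.S (m+1))), (⟨q.2, h2⟩ : ↥(T.S (m+1)))) ∈ E}
          ∈ @uniformity _ (T.u m) := by
        rw [T.compat m]
        refine Filter.mem_comap.mpr ⟨E, hE, ?_⟩
        rintro ⟨a, b⟩ hq
        exact ⟨T.mono (Nat.le_succ m) a.2, T.mono (Nat.le_succ m) b.2, hq⟩
      have hres := ihm hmem'
      apply Filter.mem_of_superset hres
      rintro ⟨a, b⟩ ⟨h1, h2, hh⟩
      obtain ⟨h1', h2', hh'⟩ := hh
      exact ⟨h1', h2', hh'⟩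

set_option maxHeartbeats 1000000 in
lemma exists_system {X Y : Type v} (T : UniformTower X) (uY : UniformSpace Y) (f : X → Y)
    (hcont : ∀ m : ℕ, @Continuous _ _ (T.u (m + 1)).toTopologicalSpace uY.toTopologicalSpace
      (fun z : T.S (m + 1) => f z.val))
    (hreg : ∀ m : ℕ, RegularAt (T.u (m + 1)) uY (fun z : T.S (m + 1) => f z.val)
      {z : T.S (m + 1) | z.val ∈ T.S m})
    (M : ℕ) (x₀ : X) (hx₀ : x₀ ∈ T.S (M+1)) {U : Set (Y × Y)}
    (hU : U ∈ @uniformity Y uY) :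
    ∃ (D : ℕ → Set (Y × Y)) (HX VX : ℕ → ℕ → Set (X × X)),
      (∀ k, D k ∈ @uniformity Y uY) ∧
      (∀ k, SetRel.IsSymm (D k)) ∧
      (∀ k, (D (k+1) ○ D (k+1)) ○ D (k+1) ⊆ D k) ∧
      D 0 ⊆ U ∧
      (∀ t k y z, (y, z) ∈ HX t k → y ∈ T.S (M+1+t) ∧ z ∈ T.S (M+1+t)) ∧
      (∀ t k y, y ∈ T.S (M+1+t) → (y, y) ∈ HX t k) ∧
      (∀ t k y z, (y, z) ∈ HX t k → (z, y) ∈ HX t k) ∧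
      (∀ t k y z, (y, z) ∈ VX t k → (z, y) ∈ VX t k) ∧
      (∀ t k y, y ∈ T.S (M+1+t) → (y, y) ∈ VX t k) ∧
      (∀ t k, HX t (k+1) ⊆ HX t k) ∧
      (∀ t k, (HX t (k+1) ○ HX t (k+1)) ○ HX t (k+1) ⊆ HX t k) ∧
      (∀ n k, {q : ↥(T.S n) × ↥(T.S n) | ((q.1 : X), (q.2 : X)) ∈ HX n k}
          ∈ @uniformity _ (T.u n)) ∧
      (∀ z, (x₀, z) ∈ HX 0 0 → (f x₀, f z) ∈ D 1) ∧
      (∀ t κ y w z, y ∈ T.S (M+1+t) → z ∈ T.S (M+1+t) →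
        (y, w) ∈ HX (t+1) κ → (w, z) ∈ VX (t+1) κ → (y, z) ∈ HX t (κ+1)) ∧
      (∀ t κ y p, p ∈ T.S (M+1+t) → (y, p) ∈ HX (t+1) κ →
        ∃ ρ, ρ ∈ T.S (M+1+t) ∧ (ρ, y) ∈ VX (t+1) κ ∧ (f y, f ρ) ∈ D (t+2)) := by
  classical
  letI : UniformSpace Y := uY
  obtain ⟨D, hDmem, hDsymm, hDtriple, hDdec, hDbnd⟩ :=
    S4Aux.exists_good_seq (Z := Y) (fun k => if k = 0 then U else Set.univ)
      (by
        intro k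
        cases k with
        | zero => simpa using hU
        | succ k => simp)
  have hD0U : D 0 ⊆ U := by have := hDbnd 0; simpa using this
  letI : UniformSpace ↥(T.S (M+1)) := T.u (M+1)
  set xb : ↥(T.S (M+1)) := ⟨x₀, hx₀⟩ with hxbdef
  have hc : ContinuousAt (fun z : ↥(T.S (M+1)) => f z.val) xb := (hcont M).continuousAt
  have hball := hc.preimage_mem_nhds (UniformSpace.ball_mem_nhds (f x₀) (hDmem 1))
  obtain ⟨C, hCmem, hCsub⟩ := UniformSpace.mem_nhds_iff.mp hball
  obtain ⟨H0, hH0mem, hH0symm, hH0triple, hH0dec, hH0bnd⟩ :=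
    S4Aux.exists_good_seq (Z := ↥(T.S (M+1))) (fun k => if k = 0 then C else Set.univ)
      (by
        intro k
        cases k with
        | zero => simpa using hCmem
        | succ k => simp)
  have hH0cont : ∀ a : ↥(T.S (M+1)), (xb, a) ∈ H0 0 → (f x₀, f a.val) ∈ D 1 := by
    intro a ha
    have h2 : (xb, a) ∈ C := by
      have := hH0bnd 0 ha
      simpa using this
    exact hCsub h2
  -- step existence
  have hstepEx : ∀ (t : ℕ) (p : ℕ → Set (↥(T.S (M+1+t)) × ↥(T.S (M+1+t)))),
      (∀ k, p k ∈ @uniformity _ (T.u (M+1+t))) →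
      ∃ (H V : ℕ → Set (↥(T.S (M+1+t+1)) × ↥(T.S (M+1+t+1)))),
        (∀ k, H k ∈ @uniformity _ (T.u (M+1+t+1))) ∧
        (∀ k, SetRel.IsSymm (H k)) ∧
        (∀ k, (H (k+1) ○ H (k+1)) ○ H (k+1) ⊆ H k) ∧
        (∀ k, H (k+1) ⊆ H k) ∧
        (∀ k, SetRel.IsSymm (V k)) ∧
        (∀ k, V k ∈ @uniformity _ (T.u (M+1+t+1))) ∧
        (∀ κ (a b w : ↥(T.S (M+1+t+1))) (ha : a.val ∈ T.S (M+1+t))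
            (hb : b.val ∈ T.S (M+1+t)),
          (a, w) ∈ H κ → (w, b) ∈ V κ →
          ((⟨a.val, ha⟩ : ↥(T.S (M+1+t))), (⟨b.val, hb⟩ : ↥(T.S (M+1+t)))) ∈ p (κ+1)) ∧
        (∀ κ (y a : ↥(T.S (M+1+t+1))), a.val ∈ T.S (M+1+t) → (y, a) ∈ H κ →
          ∃ ρ : ↥(T.S (M+1+t+1)), ρ.val ∈ T.S (M+1+t) ∧ (ρ, y) ∈ V κ ∧
            (f y.val, f ρ.val) ∈ D (t+2)) := by
    intro t p hp
    letI : UniformSpace ↥(T.S (M+1+t+1)) := T.u (M+1+t+1)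
    have hTk : ∀ κ : ℕ, ∃ E, E ∈ @uniformity _ (T.u (M+1+t+1)) ∧
        ∀ (a b : ↥(T.S (M+1+t+1))) (ha : a.val ∈ T.S (M+1+t)) (hb : b.val ∈ T.S (M+1+t)),
          (a, b) ∈ E →
          ((⟨a.val, ha⟩ : ↥(T.S (M+1+t))), (⟨b.val, hb⟩ : ↥(T.S (M+1+t)))) ∈ p (κ+1) := by
      intro κ
      have hp' := hp (κ+1)
      rw [T.compat (M+1+t)] at hp'
      obtain ⟨E, hE, hEsub⟩ := Filter.mem_comap.mp hp'
      refine ⟨E, hE, ?_⟩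
      intro a b ha hb hab
      exact hEsub hab
    choose Tk hTkmem hTksub using hTk
    have hPk : ∀ κ : ℕ, ∃ Pk ∈ @uniformity _ (T.u (M+1+t+1)),
        SetRel.IsSymm Pk ∧ Pk ○ Pk ⊆ Tk κ := fun κ => comp_symm_mem_uniformity_sets (hTkmem κ)
    choose Pk hPkmem hPksymm hPkcomp using hPk
    choose Wk hWkmem hWkreg using
      fun κ => (hreg (M+1+t)) (D (t+2)) (hDmem (t+2)) (Pk κ) (hPkmem κ)
    obtain ⟨H, hHmem, hHsymm, hHtriple, hHdec, hHbnd⟩ :=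
      S4Aux.exists_good_seq (Z := ↥(T.S (M+1+t+1))) (fun κ => Pk κ ∩ Wk κ)
        (fun κ => Filter.inter_mem (hPkmem κ) (hWkmem κ))
    refine ⟨H, Pk, hHmem, hHsymm, hHtriple, hHdec, hPksymm, hPkmem, ?_, ?_⟩
    · intro κ a b w ha hb haw hwb
      apply hTksub κ a b ha hb
      exact hPkcomp κ ⟨w, (hHbnd κ haw).1, hwb⟩
    · intro κ y a hav hya
      obtain ⟨ρ, hρA, hρV, hρf⟩ := hWkreg κ y ⟨a, hav, (hHbnd κ hya).2⟩
      exact ⟨ρ, hρA, hρV, hρf⟩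
  choose stepH stepV hstep using hstepEx
  -- internal property
  let Internal : ∀ t : ℕ, (ℕ → Set (↥(T.S (M+1+t)) × ↥(T.S (M+1+t)))) → Prop := fun t H =>
    (∀ k, H k ∈ @uniformity _ (T.u (M+1+t))) ∧ (∀ k, SetRel.IsSymm (H k)) ∧
    (∀ k, (H (k+1) ○ H (k+1)) ○ H (k+1) ⊆ H k) ∧ (∀ k, H (k+1) ⊆ H k)
  let Motive : ℕ → Type v := fun t =>
    {HV : (ℕ → Set (↥(T.S (M+1+t)) × ↥(T.S (M+1+t)))) ×
          (ℕ → Set (↥(T.S (M+1+t)) × ↥(T.S (M+1+t)))) // Internal t HV.1}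
  let step : ∀ t, Motive t → Motive (t+1) := fun t m =>
    ⟨(stepH t m.1.1 m.2.1, stepV t m.1.1 m.2.1),
      (hstep t m.1.1 m.2.1).1, (hstep t m.1.1 m.2.1).2.1,
      (hstep t m.1.1 m.2.1).2.2.1, (hstep t m.1.1 m.2.1).2.2.2.1⟩
  let seq : ∀ t, Motive t := fun t =>
    Nat.rec (⟨(H0, H0), hH0mem, hH0symm, hH0triple, hH0dec⟩ : Motive 0)
      (fun t ih => step t ih) t
  have hseqInt : ∀ t, Internal t (seq t).1.1 := fun t => (seq t).2
  have hVsymm : ∀ t k, SetRel.IsSymm ((seq t).1.2 k) := by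
    intro t
    cases t with
    | zero => exact hH0symm
    | succ t => exact (hstep t (seq t).1.1 (seq t).2.1).2.2.2.2.1
  have hVmem : ∀ t k, (seq t).1.2 k ∈ @uniformity _ (T.u (M+1+t)) := by
    intro t
    cases t with
    | zero => exact hH0mem
    | succ t => exact (hstep t (seq t).1.1 (seq t).2.1).2.2.2.2.2.1
  have hTr : ∀ t (κ : ℕ) (a b w : ↥(T.S (M+1+t+1))) (ha : a.val ∈ T.S (M+1+t))
      (hb : b.val ∈ T.S (M+1+t)),
      (a, w) ∈ (seq (t+1)).1.1 κ → (w, b) ∈ (seq (t+1)).1.2 κ →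
      ((⟨a.val, ha⟩ : ↥(T.S (M+1+t))), (⟨b.val, hb⟩ : ↥(T.S (M+1+t)))) ∈ (seq t).1.1 (κ+1) :=
    fun t => (hstep t (seq t).1.1 (seq t).2.1).2.2.2.2.2.2.1
  have hRg : ∀ t (κ : ℕ) (y a : ↥(T.S (M+1+t+1))), a.val ∈ T.S (M+1+t) →
      (y, a) ∈ (seq (t+1)).1.1 κ →
      ∃ ρ : ↥(T.S (M+1+t+1)), ρ.val ∈ T.S (M+1+t) ∧ (ρ, y) ∈ (seq (t+1)).1.2 κ ∧
        (f y.val, f ρ.val) ∈ D (t+2) :=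
    fun t => (hstep t (seq t).1.1 (seq t).2.1).2.2.2.2.2.2.2
  -- X-level sets
  let HX : ℕ → ℕ → Set (X × X) := fun t k =>
    {q : X × X | ∃ (h1 : q.1 ∈ T.S (M+1+t)) (h2 : q.2 ∈ T.S (M+1+t)),
      ((⟨q.1, h1⟩ : ↥(T.S (M+1+t))), (⟨q.2, h2⟩ : ↥(T.S (M+1+t)))) ∈ (seq t).1.1 k}
  let VX : ℕ → ℕ → Set (X × X) := fun t k =>
    {q : X × X | ∃ (h1 : q.1 ∈ T.S (M+1+t)) (h2 : q.2 ∈ T.S (M+1+t)),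
      ((⟨q.1, h1⟩ : ↥(T.S (M+1+t))), (⟨q.2, h2⟩ : ↥(T.S (M+1+t)))) ∈ (seq t).1.2 k}
  refine ⟨D, HX, VX, hDmem, hDsymm, hDtriple, hD0U, ?_, ?_, ?_, ?_, ?_, ?_, ?_, ?_, ?_, ?_, ?_⟩
  · rintro t k y z ⟨h1, h2, _⟩; exact ⟨h1, h2⟩
  · intro t k y hy
    letI : UniformSpace ↥(T.S (M+1+t)) := T.u (M+1+t)
    exact ⟨hy, hy, refl_mem_uniformity ((hseqInt t).1 k)⟩
  · rintro t k y z ⟨h1, h2, hh⟩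
    exact ⟨h2, h1, ((hseqInt t).2.1 k).symm _ _ hh⟩
  · rintro t k y z ⟨h1, h2, hh⟩
    exact ⟨h2, h1, (hVsymm t k).symm _ _ hh⟩
  · intro t k y hy
    letI : UniformSpace ↥(T.S (M+1+t)) := T.u (M+1+t)
    exact ⟨hy, hy, refl_mem_uniformity (hVmem t k)⟩
  · rintro t k ⟨y, z⟩ ⟨h1, h2, hh⟩
    exact ⟨h1, h2, (hseqInt t).2.2.2 k hh⟩
  · rintro t k ⟨y, z⟩ ⟨b, ⟨a, ⟨hy, ha, hh1⟩, ⟨ha', hb, hh2⟩⟩, ⟨hb', hz, hh3⟩⟩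
    exact ⟨hy, hz, (hseqInt t).2.2.1 k ⟨⟨b, hb⟩, ⟨⟨a, ha⟩, hh1, hh2⟩, hh3⟩⟩
  · intro n k
    have hle : n ≤ M+1+n := Nat.le_add_left n (M+1)
    have := S4Aux.trace_mem T hle ((hseqInt n).1 k)
    apply Filter.mem_of_superset this
    rintro ⟨a, b⟩ ⟨h1, h2, hh⟩
    exact ⟨h1, h2, hh⟩
  · rintro z ⟨h1, h2, hh⟩
    exact hH0cont ⟨z, h2⟩ hh
  · rintro t κ y w z hy hz ⟨hy', hw', hh1⟩ ⟨hw'', hz', hh2⟩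
    exact ⟨hy, hz, hTr t κ ⟨y, hy'⟩ ⟨z, hz'⟩ ⟨w, hw'⟩ hy hz hh1 hh2⟩
  · rintro t κ y p hp ⟨hy', hp', hh⟩
    obtain ⟨ρ, hρmem, hρV, hρf⟩ := hRg t κ ⟨y, hy'⟩ ⟨p, hp'⟩ hp hh
    exact ⟨ρ.val, hρmem, ⟨ρ.2, hy', hρV⟩, hρf⟩

end S4Aux


/-- A function `f : u-lim X_n → Y` from the uniform direct limit of a tower of uniform spaces
to a uniform space `Y` is continuous provided that for every `n ≥ 1` the restriction
`f|X_n : X_n → Y` is continuous and regular at the subset `X_{n-1} ⊆ X_n`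
(here stated with `n = m + 1`). -/
theorem statement4 {X Y : Type u} (T : UniformTower X) (uY : UniformSpace Y) (f : X → Y)
    (hcont : ∀ m : ℕ, @Continuous _ _ (T.u (m + 1)).toTopologicalSpace uY.toTopologicalSpace
      (fun z : T.S (m + 1) => f z.val))
    (hreg : ∀ m : ℕ, RegularAt (T.u (m + 1)) uY (fun z : T.S (m + 1) => f z.val)
      {z : T.S (m + 1) | z.val ∈ T.S m}) :
    @Continuous X Y T.dirLim.toTopologicalSpace uY.toTopologicalSpace f := by
    classical
  letI : UniformSpace Y := uY
  letI : TopologicalSpace X := T.dirLim.toTopologicalSpace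
  rw [continuous_iff_continuousAt]
  intro x₀
  rw [continuousAt_def]
  intro s hs
  obtain ⟨U, hU, hUb⟩ := UniformSpace.mem_nhds_iff.mp hs
  set M := T.height x₀ with hM
  have hx₀ : x₀ ∈ T.S (M+1) := T.mono (Nat.le_succ M) (T.mem_S_height x₀)
  obtain ⟨D, HX, VX, hDmem, hDsymm, hDtriple, hD0U, hHXmem, hHXrefl, hHXsymm, hVXsymm,
    hVXrefl, hHXdec, hHXtriple, hHXtrace, hHXcont, hcrossTr, hcrossReg⟩ :=
    S4Aux.exists_system T uY f hcont hreg M x₀ hx₀ hU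
  have hDrefl : ∀ k (y : Y), (y, y) ∈ D k := fun k y => refl_mem_uniformity (hDmem k)
  have hhalf0 : (0:ℝ) < 2⁻¹ := by norm_num
  have hhalf1 : (2⁻¹:ℝ) < 1 := by norm_num
  -- the accumulated error sets
  let Efin : ℕ → Set (Y × Y) := fun t => Nat.rec (D 1) (fun t ih => ih ○ D (t+2)) t
  have hEfinD0 : ∀ t, Efin t ○ D (t+1) ⊆ D 0 := by
    intro t
    induction t with
    | zero =>
        rintro ⟨a, c⟩ ⟨b, hab, hbc⟩
        exact hDtriple 0 ⟨c, ⟨b, hab, hbc⟩, hDrefl 1 c⟩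
    | succ t ih =>
        rintro ⟨a, d⟩ ⟨c, habc, hcd⟩
        obtain ⟨b, hab, hbc⟩ := habc
        have hbd : (b, d) ∈ D (t+1) := hDtriple (t+1) ⟨d, ⟨c, hbc, hcd⟩, hDrefl (t+2) d⟩
        exact ih ⟨b, hab, hbd⟩
  have hEfinsub : ∀ t, Efin t ⊆ D 0 := fun t p hp => hEfinD0 t ⟨p.2, hp, hDrefl _ _⟩
  have hEfinmono : ∀ t, Efin t ⊆ Efin (t+1) := fun t p hp => ⟨p.2, hp, hDrefl _ _⟩
  -- per-stage chain lemma
  have hchain : ∀ t m (c : ℕ → X) (kk : ℕ → ℕ) (κ : ℕ),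
      (∀ i < m, (c i, c (i+1)) ∈ HX t (kk i)) →
      (∑ i ∈ Finset.range m, (2⁻¹:ℝ) ^ kk i) < (2⁻¹:ℝ) ^ κ →
      c 0 = c m ∨ (c 0, c m) ∈ HX t κ := by
    intro t
    exact S4Aux.chain_endpoint (hHXdec t) (hHXtriple t)
      (fun k k' x y h => ⟨hHXrefl t k x (hHXmem t k' x y h).1, hHXrefl t k y (hHXmem t k' x y h).2⟩)
  -- snoc helper
  have SNOC : ∀ (E : ℕ → Set (X × X)) (m₂ : ℕ) (c₂ : ℕ → X) (kk₂ : ℕ → ℕ) (z : X) (l : ℕ),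
      (∀ i < m₂, (c₂ i, c₂ (i+1)) ∈ E (kk₂ i)) → (c₂ m₂, z) ∈ E l →
      ∃ (c' : ℕ → X) (kk' : ℕ → ℕ),
        (∀ i < m₂+1, (c' i, c' (i+1)) ∈ E (kk' i)) ∧ c' 0 = c₂ 0 ∧ c' (m₂+1) = z ∧
        (∑ i ∈ Finset.range (m₂+1), (2⁻¹:ℝ) ^ kk' i)
          = (∑ i ∈ Finset.range m₂, (2⁻¹:ℝ) ^ kk₂ i) + (2⁻¹:ℝ) ^ l := by
    intro E m₂ c₂ kk₂ z l hsteps hlast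
    refine ⟨fun i => if i ≤ m₂ then c₂ i else z, fun i => if i < m₂ then kk₂ i else l,
      ?_, ?_, ?_, ?_⟩
    · intro i hi
      beta_reduce
      rcases Nat.lt_or_ge i m₂ with h | h
      · have e1 : (if i ≤ m₂ then c₂ i else z) = c₂ i := if_pos (by omega)
        have e2 : (if i+1 ≤ m₂ then c₂ (i+1) else z) = c₂ (i+1) := if_pos (by omega)
        have e3 : (if i < m₂ then kk₂ i else l) = kk₂ i := if_pos h
        rw [e1, e2, e3]
        exact hsteps i h
      · have hieq : i = m₂ := by omega
        subst hieq
        have e1 : (if i ≤ i then c₂ i else z) = c₂ i := if_pos le_rfl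
        have e2 : (if i+1 ≤ i then c₂ (i+1) else z) = z := if_neg (by omega)
        have e3 : (if i < i then kk₂ i else l) = l := if_neg (by omega)
        rw [e1, e2, e3]
        exact hlast
    · simp
    · exact if_neg (by omega)
    · rw [Finset.sum_range_succ]
      beta_reduce
      have e3 : (if m₂ < m₂ then kk₂ m₂ else l) = l := if_neg (by omega)
      rw [e3]
      congr 1
      apply Finset.sum_congr rfl
      intro i hi
      beta_reduce
      rw [if_pos (Finset.mem_range.mp hi)]
  -- main induction on the maximal stage offset
  have MAIN : ∀ hi m (c : ℕ → X) (kk : ℕ → ℕ),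
      (∀ i < m, ∃ t ≤ hi, (c i, c (i+1)) ∈ HX t (kk i)) → c 0 = x₀ →
      (∑ i ∈ Finset.range m, (2⁻¹:ℝ) ^ kk i) < 1 → (f x₀, f (c m)) ∈ Efin hi := by
    intro hi
    induction hi with
    | zero =>
        intro m c kk hsteps hc0 hsum
        have hpure : ∀ i < m, (c i, c (i+1)) ∈ HX 0 (kk i) := by
          intro i hi'
          obtain ⟨t, ht, hmem⟩ := hsteps i hi'
          have ht0 : t = 0 := by omega
          rw [ht0] at hmem
          exact hmem
        have hres := hchain 0 m c kk 0 hpure (by simpa using hsum)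
        rcases hres with h | h
        · have : c m = x₀ := h.symm.trans hc0
          rw [this]
          exact hDrefl 1 _
        · rw [hc0] at h
          exact hHXcont _ h
    | succ t iht =>
        intro m c kk hsteps hc0 hsum
        -- the step relation for reduced chains
        set Ered : ℕ → Set (X × X) := fun l => {q | ∃ t' ≤ t, q ∈ HX t' l} with hEred
        have hwnonneg : ∀ (kku : ℕ → ℕ) (a : ℕ), 0 ≤ ∑ i ∈ Finset.range a, (2⁻¹:ℝ) ^ kku i := by
          intro kku a
          apply Finset.sum_nonneg
          intro i _
          positivity
        have hwmono : ∀ a b, a ≤ b →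
            (∑ i ∈ Finset.range a, (2⁻¹:ℝ) ^ kk i) ≤ ∑ i ∈ Finset.range b, (2⁻¹:ℝ) ^ kk i := by
          intro a b hab
          apply Finset.sum_le_sum_of_subset_of_nonneg (Finset.range_subset_range.mpr hab)
          intro i _ _
          positivity
        have INNER : ∀ j, j ≤ m →
            ∃ (m₁ : ℕ) (c₁ : ℕ → X) (kk₁ : ℕ → ℕ) (m₂ : ℕ) (c₂ : ℕ → X) (kk₂ : ℕ → ℕ),
              (∀ i < m₁, (c₁ i, c₁ (i+1)) ∈ Ered (kk₁ i)) ∧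
              c₁ 0 = x₀ ∧ (c₁ m₁) ∈ T.S (M+1+t) ∧
              (∀ i < m₂, (c₂ i, c₂ (i+1)) ∈ HX (t+1) (kk₂ i)) ∧
              c₂ 0 = c₁ m₁ ∧ c₂ m₂ = c j ∧
              (∑ i ∈ Finset.range m₁, (2⁻¹:ℝ) ^ kk₁ i)
                + (∑ i ∈ Finset.range m₂, (2⁻¹:ℝ) ^ kk₂ i)
                ≤ ∑ i ∈ Finset.range j, (2⁻¹:ℝ) ^ kk i := by
          intro j
          induction j with
          | zero =>
              intro _
              refine ⟨0, fun _ => x₀, fun _ => 0, 0, fun _ => x₀, fun _ => 0,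
                ?_, rfl, ?_, ?_, rfl, hc0.symm, by simp⟩
              · intro i hi'; omega
              · exact T.mono (by omega) hx₀
              · intro i hi'; omega
          | succ j ihj =>
              intro hj1
              obtain ⟨m₁, c₁, kk₁, m₂, c₂, kk₂, h₁steps, h₁0, h₁mem, h₂steps, h₂0, h₂end, hwt⟩ :=
                ihj (by omega)
              obtain ⟨t', ht'le, hstepmem⟩ := hsteps j (by omega)
              rcases Nat.lt_or_ge t' (t+1) with hlt | hge
              · -- t' ≤ t : collapse pure segment, extend reduced chain
                have ht't : t' ≤ t := by omega
                have hcjS : c j ∈ T.S (M+1+t) :=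
                  T.mono (by omega) (hHXmem t' (kk j) _ _ hstepmem).1
                have hcj1S : c (j+1) ∈ T.S (M+1+t) :=
                  T.mono (by omega) (hHXmem t' (kk j) _ _ hstepmem).2
                rcases Nat.eq_zero_or_pos m₂ with hm₂ | hm₂
                · -- empty pure segment : c₁ m₁ = c j
                  have h₂end0 : c₂ 0 = c j := by rw [← hm₂]; exact h₂end
                  have hpj : c₁ m₁ = c j := by rw [← h₂0]; exact h₂end0
                  have hstep' : (c₁ m₁, c (j+1)) ∈ Ered (kk j) := by
                    rw [hpj]
                    exact ⟨t', ht't, hstepmem⟩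
                  obtain ⟨c₁', kk₁', hsteps', h0', hend', hsum'⟩ :=
                    SNOC Ered m₁ c₁ kk₁ (c (j+1)) (kk j) h₁steps hstep'
                  refine ⟨m₁+1, c₁', kk₁', 0, fun _ => c (j+1), fun _ => 0,
                    hsteps', by rw [h0']; exact h₁0, by rw [hend']; exact hcj1S,
                    ?_, by rw [hend'], rfl, ?_⟩
                  · intro i hi'; omega
                  · rw [hsum', Finset.sum_range_succ]
                    have h₂w0 : (∑ i ∈ Finset.range m₂, (2⁻¹:ℝ) ^ kk₂ i) = 0 := by
                      rw [hm₂]; simp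
                    simp only [Finset.range_zero, Finset.sum_empty]
                    rw [h₂w0] at hwt
                    linarith
                · -- nonempty pure segment : collapse it by the chain lemma + trace property
                  have hw₂pos : 0 < ∑ i ∈ Finset.range m₂, (2⁻¹:ℝ) ^ kk₂ i := by
                    apply Finset.sum_pos
                    · intro i _; positivity
                    · exact Finset.nonempty_range_iff.mpr (by omega)
                  have hw₂lt1 : (∑ i ∈ Finset.range m₂, (2⁻¹:ℝ) ^ kk₂ i) < 1 := by
                    have h1 := hwnonneg kk₁ m₁
                    have h2 := hwmono j m (by omega)
                    linarith
                  obtain ⟨κ, hκ1, hκ2⟩ := S4Aux.exists_pow_bracket hw₂pos hw₂lt1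
                  have hpc : (c₁ m₁, c j) ∈ HX (t+1) κ := by
                    rcases hchain (t+1) m₂ c₂ kk₂ κ h₂steps hκ2 with h | h
                    · rw [← h₂0, ← h₂end, ← h]
                      exact hHXrefl (t+1) κ (c₂ 0) (by rw [h₂0]; exact T.mono (by omega) h₁mem)
                    · rw [← h₂0, ← h₂end]
                      exact h
                  have hcoll : (c₁ m₁, c j) ∈ HX t (κ+1) :=
                    hcrossTr t κ (c₁ m₁) (c j) (c j) h₁mem hcjS hpc
                      (hVXrefl (t+1) κ (c j) (T.mono (by omega) hcjS))
                  obtain ⟨c₁', kk₁', hsteps', h0', hend', hsum'⟩ :=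
                    SNOC Ered m₁ c₁ kk₁ (c j) (κ+1) h₁steps ⟨t, le_rfl, hcoll⟩
                  have hstep2 : (c₁' (m₁+1), c (j+1)) ∈ Ered (kk j) := by
                    rw [hend']
                    exact ⟨t', ht't, hstepmem⟩
                  obtain ⟨c₁'', kk₁'', hsteps'', h0'', hend'', hsum''⟩ :=
                    SNOC Ered (m₁+1) c₁' kk₁' (c (j+1)) (kk j) hsteps' hstep2
                  refine ⟨m₁+2, c₁'', kk₁'', 0, fun _ => c (j+1), fun _ => 0,
                    hsteps'', by rw [h0'', h0']; exact h₁0, by rw [hend'']; exact hcj1S,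
                    ?_, by rw [hend''], rfl, ?_⟩
                  · intro i hi'; omega
                  · rw [hsum'', hsum', Finset.sum_range_succ]
                    simp only [Finset.range_zero, Finset.sum_empty]
                    have hps : (2⁻¹:ℝ) ^ (κ+1) ≤ ∑ i ∈ Finset.range m₂, (2⁻¹:ℝ) ^ kk₂ i := hκ1
                    linarith
              · -- t' = t+1 : extend the pure segment
                have ht'eq : t' = t+1 := by omega
                rw [ht'eq] at hstepmem
                have hstep' : (c₂ m₂, c (j+1)) ∈ HX (t+1) (kk j) := by
                  rw [h₂end]
                  exact hstepmem
                obtain ⟨c₂', kk₂', hsteps', h0', hend', hsum'⟩ :=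
                  SNOC (fun l => HX (t+1) l) m₂ c₂ kk₂ (c (j+1)) (kk j) h₂steps hstep'
                refine ⟨m₁, c₁, kk₁, m₂+1, c₂', kk₂', h₁steps, h₁0, h₁mem,
                  hsteps', by rw [h0']; exact h₂0, hend', ?_⟩
                rw [hsum', Finset.sum_range_succ]
                linarith
        -- conclude for the full chain
        obtain ⟨m₁, c₁, kk₁, m₂, c₂, kk₂, h₁steps, h₁0, h₁mem, h₂steps, h₂0, h₂end, hwt⟩ :=
          INNER m le_rfl
        have hw₁lt1 : (∑ i ∈ Finset.range m₁, (2⁻¹:ℝ) ^ kk₁ i) < 1 := by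
          have h1 := hwnonneg kk₂ m₂
          linarith
        have hredMain : ∀ (mr : ℕ) (cr : ℕ → X) (kkr : ℕ → ℕ),
            (∀ i < mr, (cr i, cr (i+1)) ∈ Ered (kkr i)) → cr 0 = x₀ →
            (∑ i ∈ Finset.range mr, (2⁻¹:ℝ) ^ kkr i) < 1 → (f x₀, f (cr mr)) ∈ Efin t := by
          intro mr cr kkr hst h0 hsm
          exact iht mr cr kkr (fun i hi' => hst i hi') h0 hsm
        rcases Nat.eq_zero_or_pos m₂ with hm₂ | hm₂
        · have h₂end0 : c₂ 0 = c m := by rw [← hm₂]; exact h₂end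
          have hpj : c₁ m₁ = c m := by rw [← h₂0]; exact h₂end0
          have := hredMain m₁ c₁ kk₁ h₁steps h₁0 hw₁lt1
          rw [hpj] at this
          exact hEfinmono t this
        · have hw₂pos : 0 < ∑ i ∈ Finset.range m₂, (2⁻¹:ℝ) ^ kk₂ i := by
            apply Finset.sum_pos
            · intro i _; positivity
            · exact Finset.nonempty_range_iff.mpr (by omega)
          have hw₂lt1 : (∑ i ∈ Finset.range m₂, (2⁻¹:ℝ) ^ kk₂ i) < 1 := by
            have h1 := hwnonneg kk₁ m₁
            linarith
          obtain ⟨κ, hκ1, hκ2⟩ := S4Aux.exists_pow_bracket hw₂pos hw₂lt1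
          rcases hchain (t+1) m₂ c₂ kk₂ κ h₂steps hκ2 with h | h
          · have hpj : c₁ m₁ = c m := by rw [← h₂0, ← h₂end, ← h]
            have := hredMain m₁ c₁ kk₁ h₁steps h₁0 hw₁lt1
            rw [hpj] at this
            exact hEfinmono t this
          · have hpc : (c₁ m₁, c m) ∈ HX (t+1) κ := by rw [← h₂0, ← h₂end]; exact h
            obtain ⟨ρ, hρmem, hρV, hρf⟩ :=
              hcrossReg t κ (c m) (c₁ m₁) h₁mem (hHXsymm (t+1) κ _ _ hpc)
            have hcoll : (c₁ m₁, ρ) ∈ HX t (κ+1) :=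
              hcrossTr t κ (c₁ m₁) (c m) ρ h₁mem hρmem hpc (hVXsymm (t+1) κ _ _ hρV)
            obtain ⟨c₁', kk₁', hsteps', h0', hend', hsum'⟩ :=
              SNOC Ered m₁ c₁ kk₁ ρ (κ+1) h₁steps ⟨t, le_rfl, hcoll⟩
            have hsum'lt : (∑ i ∈ Finset.range (m₁+1), (2⁻¹:ℝ) ^ kk₁' i) < 1 := by
              rw [hsum']
              have : (2⁻¹:ℝ) ^ (κ+1) ≤ ∑ i ∈ Finset.range m₂, (2⁻¹:ℝ) ^ kk₂ i := hκ1
              linarith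
            have hrr := hredMain (m₁+1) c₁' kk₁' hsteps' (by rw [h0']; exact h₁0) hsum'lt
            rw [hend'] at hrr
            exact ⟨f ρ, hrr, (hDsymm (t+2)).symm _ _ hρf⟩
  -- the candidate uniformity from chains
  let V : ℕ → Set (X × X) := fun k =>
    {q : X × X | ∃ (m : ℕ) (c : ℕ → X) (kk : ℕ → ℕ), c 0 = q.1 ∧ c m = q.2 ∧
      (∀ i < m, ∃ t, (c i, c (i+1)) ∈ HX t (kk i)) ∧
      (∑ i ∈ Finset.range m, (2⁻¹:ℝ) ^ kk i) < (2⁻¹:ℝ) ^ k}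
  have hVrefl : ∀ k, SetRel.id ⊆ V k := by
    intro k p hp
    rcases p with ⟨a, b⟩
    have hab : a = b := hp
    refine ⟨0, fun _ => a, fun _ => 0, rfl, hab, ?_, by positivity⟩
    intro i hi'; omega
  have hVsymm : ∀ k (a b : X), (a, b) ∈ V k → (b, a) ∈ V k := by
    intro k a b ⟨m, c, kk, hc0, hcm, hsteps, hsum⟩
    refine ⟨m, fun i => c (m - i), fun i => kk (m - 1 - i), by simpa using hcm, ?_, ?_, ?_⟩
    · simpa using hc0
    · intro i hi'
      beta_reduce
      obtain ⟨t, hmem⟩ := hsteps (m - 1 - i) (by omega)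
      refine ⟨t, ?_⟩
      have e1 : m - 1 - i + 1 = m - i := by omega
      have e2 : m - (i+1) = m - 1 - i := by omega
      rw [e2]
      rw [e1] at hmem
      exact hHXsymm t _ _ _ hmem
    · beta_reduce
      rw [Finset.sum_range_reflect (fun i => (2⁻¹:ℝ) ^ kk i) m]
      exact hsum
  have hVcomp : ∀ k, V (k+1) ○ V (k+1) ⊆ V k := by
    rintro k ⟨a, b⟩ ⟨y, ⟨m₁, c₁, kk₁, h10, h1m, h1s, h1w⟩, ⟨m₂, c₂, kk₂, h20, h2m, h2s, h2w⟩⟩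
    refine ⟨m₁ + m₂, fun i => if i ≤ m₁ then c₁ i else c₂ (i - m₁),
      fun i => if i < m₁ then kk₁ i else kk₂ (i - m₁), ?_, ?_, ?_, ?_⟩
    · simpa using h10
    · beta_reduce
      rcases Nat.eq_zero_or_pos m₂ with h | h
      · have e1 : m₁ + m₂ ≤ m₁ := by omega
        rw [if_pos e1]
        have : c₁ (m₁ + m₂) = c₁ m₁ := by rw [show m₁ + m₂ = m₁ by omega]
        rw [this, h1m]
        exact h20.symm.trans ((congrArg c₂ h.symm).trans h2m)
      · have e1 : ¬ (m₁ + m₂ ≤ m₁) := by omega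
        rw [if_neg e1, show m₁ + m₂ - m₁ = m₂ by omega, h2m]
    · intro i hi'
      beta_reduce
      rcases Nat.lt_or_ge i m₁ with h | h
      · obtain ⟨t, hmem⟩ := h1s i h
        refine ⟨t, ?_⟩
        rw [if_pos (by omega : i ≤ m₁), if_pos (by omega : i + 1 ≤ m₁), if_pos h]
        exact hmem
      · obtain ⟨t, hmem⟩ := h2s (i - m₁) (by omega)
        refine ⟨t, ?_⟩
        rw [if_neg (by omega : ¬ (i + 1 ≤ m₁)), if_neg (by omega : ¬ (i < m₁)),
          show i + 1 - m₁ = (i - m₁) + 1 by omega]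
        rcases Nat.eq_or_lt_of_le h with he | hgt
        · have e0 : i - m₁ = 0 := by omega
          rw [if_pos (by omega : i ≤ m₁)]
          have ec : c₁ i = c₂ (i - m₁) := by
            rw [e0, h20, show i = m₁ from by omega]
            exact h1m
          rw [ec]
          exact hmem
        · rw [if_neg (by omega : ¬ (i ≤ m₁))]
          exact hmem
    · beta_reduce
      have hsplit := S4Aux.sum_range_add'
        (fun i => (2⁻¹:ℝ) ^ (if i < m₁ then kk₁ i else kk₂ (i - m₁))) m₁ m₂
      rw [hsplit]
      have e1 : (∑ i ∈ Finset.range m₁, (2⁻¹:ℝ) ^ (if i < m₁ then kk₁ i else kk₂ (i - m₁)))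
          = ∑ i ∈ Finset.range m₁, (2⁻¹:ℝ) ^ kk₁ i := by
        apply Finset.sum_congr rfl
        intro i hi'
        rw [if_pos (Finset.mem_range.mp hi')]
      have e2 : (∑ i ∈ Finset.range m₂,
            (2⁻¹:ℝ) ^ (if m₁ + i < m₁ then kk₁ (m₁ + i) else kk₂ (m₁ + i - m₁)))
          = ∑ i ∈ Finset.range m₂, (2⁻¹:ℝ) ^ kk₂ i := by
        apply Finset.sum_congr rfl
        intro i _
        rw [if_neg (by omega : ¬ (m₁ + i < m₁)), show m₁ + i - m₁ = i by omega]
      rw [e1, e2]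
      have hps : (2⁻¹:ℝ) ^ (k+1) = (2⁻¹:ℝ) ^ k * 2⁻¹ := pow_succ _ _
      have h2 : (2⁻¹:ℝ) ^ (k+1) + (2⁻¹:ℝ) ^ (k+1) = (2⁻¹:ℝ) ^ k := by rw [hps]; ring
      linarith
  have hVanti : ∀ a b : ℕ, a ≤ b → V b ⊆ V a := by
    intro a b hab
    induction hab with
    | refl => exact fun _ h => h
    | @step b _ ih =>
        refine fun p hp => ih ?_
        obtain ⟨m, c, kk, hc0, hcm, hsteps, hsum⟩ := hp
        refine ⟨m, c, kk, hc0, hcm, hsteps, lt_trans hsum ?_⟩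
        exact (pow_lt_pow_iff_right_of_lt_one₀ hhalf0 hhalf1).mpr (by omega)
  let F : Filter (X × X) := ⨅ k, 𝓟 (V k)
  have hdir : Directed (fun x1 x2 => x1 ≥ x2) (fun k => (𝓟 (V k) : Filter (X × X))) := by
    intro a b
    exact ⟨max a b, Filter.principal_mono.mpr (hVanti a _ (le_max_left a b)),
      Filter.principal_mono.mpr (hVanti b _ (le_max_right a b))⟩
  have hFmem : ∀ s : Set (X × X), s ∈ F ↔ ∃ k, V k ⊆ s := by
    intro s
    rw [Filter.mem_iInf_of_directed hdir]
    simp only [Filter.mem_principal]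
  let u' : UniformSpace X := UniformSpace.ofCore
    { uniformity := F
      refl := le_iInf fun k => Filter.principal_mono.mpr (hVrefl k)
      symm := by
        rw [Filter.tendsto_def]
        intro s hs
        obtain ⟨k, hk⟩ := (hFmem s).mp hs
        refine (hFmem _).mpr ⟨k, ?_⟩
        rintro ⟨a, b⟩ hab
        exact hk (hVsymm k a b hab)
      comp := by
        intro s hs
        obtain ⟨k, hk⟩ := (hFmem s).mp hs
        apply Filter.mem_of_superset (Filter.mem_lift' ((hFmem (V (k+1))).mpr ⟨k+1, subset_rfl⟩))
        exact subset_trans (hVcomp k) hk }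
  have hu'unif : @uniformity X u' = F := rfl
  have hu'in : u' ∈ {w : UniformSpace X |
      ∀ n, @UniformContinuous _ _ (T.u n) w (Subtype.val : T.S n → X)} := by
    intro n
    rw [@uniformContinuous_def _ _ (T.u n) u']
    intro s hs
    obtain ⟨k, hk⟩ := (hFmem s).mp hs
    apply Filter.mem_of_superset (hHXtrace n (k+1))
    rintro ⟨a, b⟩ hab
    apply hk
    refine ⟨1, fun i => if i = 0 then a.val else b.val, fun _ => k+1, rfl, rfl, ?_, ?_⟩
    · intro i hi'
      have hi0 : i = 0 := by omega
      subst hi0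
      simpa using ⟨n, hab⟩
    · rw [Finset.sum_range_one]
      beta_reduce
      exact (pow_lt_pow_iff_right_of_lt_one₀ hhalf0 hhalf1).mpr (by omega)
  have hle : T.dirLim ≤ u' := sInf_le hu'in
  have h1 : f ⁻¹' s ∈ @nhds X u'.toTopologicalSpace x₀ := by
    rw [@UniformSpace.mem_nhds_iff X u' x₀ (f ⁻¹' s)]
    refine ⟨V 0, (hFmem _).mpr ⟨0, subset_rfl⟩, ?_⟩
    intro z hz
    obtain ⟨m, c, kk, hc0, hcm, hsteps, hsum⟩ := hz
    choose tf htf using hsteps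
    set hi : ℕ := Finset.sup (Finset.range m) (fun i => if h : i < m then tf i h else 0)
      with hhi
    have hsteps' : ∀ i < m, ∃ t ≤ hi, (c i, c (i+1)) ∈ HX t (kk i) := by
      intro i hi'
      refine ⟨tf i hi', ?_, htf i hi'⟩
      have hls := Finset.le_sup (f := fun i => if h : i < m then tf i h else 0)
        (Finset.mem_range.mpr hi')
      beta_reduce at hls
      rw [dif_pos hi'] at hls
      exact hls
    have hmain := MAIN hi m c kk hsteps' hc0 (by simpa using hsum)
    rw [hcm] at hmain
    have : (f x₀, f z) ∈ U := hD0U (hEfinsub hi hmain)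
    exact hUb this
  exact _root_.nhds_mono (UniformSpace.toTopologicalSpace_mono hle) h1
end
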